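/- arXiv:1806.08533 — 4 statements merged into one kernel-verified Lean document; each statement's English description precedes it below -/
import Mathlib

section
/- Propagation of Lipschitz regularity (Proposition 3.6.c): Under the standing assumptions and the solution hypotheses, if in addition Φ is globally Lipschitz with constant L>0 (i.e. |Φ(x)−Φ(x')|≤L|x−x'| for all x,x'∈ℝ), then |u(t,x)−u(t,x')| ≤ L|x−x'| for all t∈[0,T] and x,x'∈ℝ. -/
open Set Filter

section AuxLemmas
open Topology

lemma sq_helper {a b r : ℝ} (h : (a - b)^2 ≤ r^2) (hr : 0 ≤ r) :
    b - r ≤ a ∧ a ≤ b + r := by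
  constructor <;> nlinarith [sq_nonneg (a - b)]

lemma second_deriv_test {f : ℝ → ℝ} {a : ℝ} (hf : ContDiff ℝ 2 f)
    (hmax : IsLocalMax f a) : deriv (deriv f) a ≤ 0 := by
  by_contra hpos
  push_neg at hpos
  have hf' : ContDiff ℝ (1 + 1) f := by norm_num [hf]
  have hsucc := (contDiff_succ_iff_deriv (n := 1)).mp hf'
  have hf1 : Differentiable ℝ f := hsucc.1
  have hfd : Differentiable ℝ (deriv f) := hsucc.2.2.differentiable one_ne_zero
  have h0 : deriv f a = 0 := hmax.deriv_eq_zero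
  have hda : HasDerivAt (deriv f) (deriv (deriv f) a) a := (hfd a).hasDerivAt
  have hslope := hasDerivAt_iff_tendsto_slope.mp hda
  have hmono : (𝓝[Set.Ioi a] a) ≤ (𝓝[{a}ᶜ] a) :=
    nhdsWithin_mono a (fun x hx => ne_of_gt hx)
  have hev : ∀ᶠ x in 𝓝[Set.Ioi a] a, 0 < slope (deriv f) a x :=
    (hslope.mono_left hmono).eventually (eventually_gt_nhds hpos)
  have hev2 : ∀ᶠ x in 𝓝[Set.Ioi a] a, 0 < deriv f x := by
    filter_upwards [hev, eventually_mem_nhdsWithin] with x hx hxa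
    rw [slope_def_field, h0, sub_zero] at hx
    have hxa' : 0 < x - a := sub_pos.mpr hxa
    by_contra hh
    push_neg at hh
    have : deriv f x / (x - a) ≤ 0 := div_nonpos_iff.mpr (Or.inr ⟨hh, hxa'.le⟩)
    linarith
  have hev3 : ∀ᶠ x in 𝓝[Set.Ioi a] a, f x ≤ f a := hmax.filter_mono nhdsWithin_le_nhds
  obtain ⟨b, hb, hIoc⟩ := mem_nhdsGT_iff_exists_Ioc_subset.mp (hev2.and hev3)
  have hmono2 : StrictMonoOn f (Set.Icc a b) := by
    apply strictMonoOn_of_deriv_pos (convex_Icc a b) (hf1.continuous.continuousOn)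
    intro x hx
    rw [interior_Icc] at hx
    exact (hIoc ⟨hx.1, hx.2.le⟩).1
  have h1 : f a < f b := hmono2 ⟨le_rfl, hb.le⟩ ⟨hb.le, le_rfl⟩ hb
  have h2 : f b ≤ f a := (hIoc ⟨hb, le_rfl⟩).2
  linarith

lemma deriv_nonpos_right {f : ℝ → ℝ} {d a b : ℝ} (hab : a < b)
    (hd : HasDerivWithinAt f d (Set.Icc a b) a)
    (hmax : ∀ t ∈ Set.Icc a b, f t ≤ f a) : d ≤ 0 := by
  have hT := hasDerivWithinAt_iff_tendsto_slope.mp hd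
  have hsub : Set.Ioc a b ⊆ Set.Icc a b \ {a} := by
    intro x hx
    exact ⟨⟨hx.1.le, hx.2⟩, ne_of_gt hx.1⟩
  have hT' : Tendsto (slope f a) (𝓝[Set.Ioc a b] a) (𝓝 d) :=
    hT.mono_left (nhdsWithin_mono a hsub)
  haveI : (𝓝[Set.Ioc a b] a).NeBot := by
    rw [nhdsWithin_Ioc_eq_nhdsGT hab]
    infer_instance
  refine le_of_tendsto hT' ?_
  filter_upwards [eventually_mem_nhdsWithin] with x hx
  rw [slope_def_field]
  have h1 : f x - f a ≤ 0 := sub_nonpos.mpr (hmax x ⟨hx.1.le, hx.2⟩)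
  have h2 : 0 ≤ x - a := sub_nonneg.mpr hx.1.le
  exact div_nonpos_iff.mpr (Or.inr ⟨h1, h2⟩)

lemma deriv_deriv_comb {g : ℝ → ℝ} (hg : ContDiff ℝ 2 g) (σ L δ x₀ a : ℝ) :
    deriv (deriv (fun x => σ * g x - (L * x + δ * (x - x₀)^2))) a
      = σ * deriv (deriv g) a - 2 * δ := by
  have hg' : ContDiff ℝ (1 + 1) g := by norm_num [hg]
  have hsucc := (contDiff_succ_iff_deriv (n := 1)).mp hg'
  have hg1 : Differentiable ℝ g := hsucc.1
  have hg2 : Differentiable ℝ (deriv g) := hsucc.2.2.differentiable one_ne_zero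
  have step1 : deriv (fun x => σ * g x - (L * x + δ * (x - x₀)^2))
      = fun x => σ * deriv g x - (L + δ * (2 * (x - x₀))) := by
    funext x
    have hgx : HasDerivAt g (deriv g x) x := (hg1 x).hasDerivAt
    have hpoly : HasDerivAt (fun x => L * x + δ * (x - x₀)^2)
        (L + δ * (2 * (x - x₀))) x := by
      have h1 : HasDerivAt (fun x : ℝ => L * x) (L * 1) x := (hasDerivAt_id x).const_mul L
      have h2 : HasDerivAt (fun x : ℝ => (x - x₀)^2) ((2:ℕ) * (x - x₀)^(2-1) * 1) x :=
        ((hasDerivAt_id x).sub_const x₀).pow 2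
      have := h1.add (h2.const_mul δ)
      refine this.congr_deriv ?_
      push_cast
      ring
    exact ((hgx.const_mul σ).sub hpoly).deriv
  rw [step1]
  have h2 : HasDerivAt (fun x => σ * deriv g x - (L + δ * (2 * (x - x₀))))
      (σ * deriv (deriv g) a - δ * (2 * 1)) a := by
    have hgx : HasDerivAt (deriv g) (deriv (deriv g) a) a := (hg2 a).hasDerivAt
    have hpoly : HasDerivAt (fun x : ℝ => L + δ * (2 * (x - x₀))) (δ * (2 * 1)) a := by
      exact (((hasDerivAt_id a).sub_const x₀).const_mul 2 |>.const_mul δ).const_add L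
    exact (hgx.const_mul σ).sub hpoly
  rw [h2.deriv]
  ring

end AuxLemmas

noncomputable section

/-- Second derivative in the space variable of a function of `(t, x)`. -/
def d2x (u : ℝ → ℝ → ℝ) (t x : ℝ) : ℝ := iteratedDeriv 2 (fun y => u t y) x

/-- Data of the abstract market impact model of Section 2. -/
structure Standing where
  /-- the time horizon -/
  T : ℝ
  T_pos : 0 < T
  /-- the threshold `ε₀` -/
  eps0 : ℝ
  eps0_mem : eps0 ∈ Set.Ioc (0 : ℝ) 1
  /-- the `ℝ ∪ {+∞}`-valued cost function `F` -/
  F : ℝ → ℝ → ℝ → EReal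
  /-- the nonlinearity `F̄`, real-valued on the domain `D` -/
  Fbar : ℝ → ℝ → ℝ → ℝ
  /-- the gamma constraint `γ̄`, possibly `+∞` -/
  gammaBar : ℝ → ℝ → EReal
  L0 : ℝ
  M : ℝ
  L0_pos : 0 < L0
  M_pos : 0 < M
  /-- `∂ₜ F̄` -/
  FbarT : ℝ → ℝ → ℝ → ℝ
  /-- `∂ₓ F̄` -/
  FbarX : ℝ → ℝ → ℝ → ℝ
  /-- `∂_z F̄` -/
  FbarZ : ℝ → ℝ → ℝ → ℝ

namespace Standing

/-- The domain `D = {F < ∞}`. -/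
def D (S : Standing) : Set (ℝ × ℝ × ℝ) :=
  {p | p.1 ∈ Set.Icc 0 S.T ∧ S.F p.1 p.2.1 p.2.2 < ⊤}

/-- The set `D_ε = {F ≤ 1/ε}`. -/
def Deps (S : Standing) (ε : ℝ) : Set (ℝ × ℝ × ℝ) :=
  {p | p.1 ∈ Set.Icc 0 S.T ∧ S.F p.1 p.2.1 p.2.2 ≤ ((1 / ε : ℝ) : EReal)}

/-- The set `D_{ε,k}`. -/
def DepsK (S : Standing) (ε k : ℝ) : Set (ℝ × ℝ × ℝ) :=
  S.Deps ε ∩ {p | |p.2.2| ≤ k}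

/-- The standing assumptions on the abstract model. -/
structure Hyp (S : Standing) : Prop where
  /-- `F` is continuous (with values in `ℝ ∪ {+∞}`). -/
  F_cont : Continuous fun p : ℝ × ℝ × ℝ => S.F p.1 p.2.1 p.2.2
  /-- the domain of `F` is `{z < γ̄(t,x)}`. -/
  domain_eq : ∀ p : ℝ × ℝ × ℝ, p.1 ∈ Set.Icc 0 S.T →
      (S.F p.1 p.2.1 p.2.2 < ⊤ ↔ ((p.2.2 : ℝ) : EReal) < S.gammaBar p.1 p.2.1)
  /-- `γ̄` is either identically `+∞` or real-valued and uniformly continuous. -/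
  gamma_cases :
      (∀ t x, S.gammaBar t x = ⊤) ∨
      (∃ g : ℝ → ℝ → ℝ, (∀ t x, S.gammaBar t x = ((g t x : ℝ) : EReal)) ∧
        UniformContinuousOn (fun p : ℝ × ℝ => g p.1 p.2) (Set.Icc 0 S.T ×ˢ Set.univ))
  /-- `F̄` is continuous on `D`. -/
  Fbar_cont : ContinuousOn (fun p : ℝ × ℝ × ℝ => S.Fbar p.1 p.2.1 p.2.2) S.D
  /-- (R1) `F̄` is `C¹` on `D`: existence of the partial derivatives. -/
  Fbar_dT : ∀ p ∈ S.D,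
      HasDerivWithinAt (fun s => S.Fbar s p.2.1 p.2.2) (S.FbarT p.1 p.2.1 p.2.2)
        (Set.Icc 0 S.T) p.1
  Fbar_dX : ∀ p ∈ S.D,
      HasDerivAt (fun y => S.Fbar p.1 y p.2.2) (S.FbarX p.1 p.2.1 p.2.2) p.2.1
  Fbar_dZ : ∀ p ∈ S.D,
      HasDerivAt (fun w => S.Fbar p.1 p.2.1 w) (S.FbarZ p.1 p.2.1 p.2.2) p.2.2
  /-- (R1) continuity of the partial derivatives on `D`. -/
  FbarT_cont : ContinuousOn (fun p : ℝ × ℝ × ℝ => S.FbarT p.1 p.2.1 p.2.2) S.D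
  FbarX_cont : ContinuousOn (fun p : ℝ × ℝ × ℝ => S.FbarX p.1 p.2.1 p.2.2) S.D
  FbarZ_cont : ContinuousOn (fun p : ℝ × ℝ × ℝ => S.FbarZ p.1 p.2.1 p.2.2) S.D
  /-- (R1) partial derivatives of order `1` in `t`, up to `3` in `x` and in `z`,
  are bounded on `D_{ε,1/ε}`. -/
  derivs_bdd : ∀ ε ∈ Set.Ioc (0 : ℝ) S.eps0, ∃ C : ℝ,
      ∀ p ∈ S.DepsK ε (1 / ε), ∀ n : ℕ, 1 ≤ n → n ≤ 3 →
        |iteratedDeriv n (fun y => S.Fbar p.1 y p.2.2) p.2.1| ≤ C ∧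
        |iteratedDeriv n (fun w => S.Fbar p.1 p.2.1 w) p.2.2| ≤ C ∧
        |S.FbarT p.1 p.2.1 p.2.2| ≤ C
  /-- (R1) `F̄` is uniformly continuous on `D_ε`. -/
  Fbar_unifCont : ∀ ε ∈ Set.Ioc (0 : ℝ) S.eps0,
      UniformContinuousOn (fun p : ℝ × ℝ × ℝ => S.Fbar p.1 p.2.1 p.2.2) (S.Deps ε)
  /-- (R2) `F(t,x,0) = 0` and `F̄(t,x,0) = 0`. -/
  F_zero : ∀ t ∈ Set.Icc (0 : ℝ) S.T, ∀ x : ℝ, S.F t x 0 = 0 ∧ S.Fbar t x 0 = 0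
  /-- (R3) `|∂ₜF̄| ≤ L₀ |F̄|` on `D`. -/
  FbarT_bdd : ∀ p ∈ S.D,
      |S.FbarT p.1 p.2.1 p.2.2| ≤ S.L0 * |S.Fbar p.1 p.2.1 p.2.2|
  /-- (R3) `|∂²ₓF̄(t,x,z)| ≤ M |z|` on `D`. -/
  Fbarxx_bdd : ∀ p ∈ S.D,
      |iteratedDeriv 2 (fun y => S.Fbar p.1 y p.2.2) p.2.1| ≤ S.M * |p.2.2|
  /-- (R4) `∂_z F̄ > 0` on `D_ε`. -/
  FbarZ_pos : ∀ ε ∈ Set.Ioc (0 : ℝ) S.eps0, ∀ p ∈ S.Deps ε,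
      0 < S.FbarZ p.1 p.2.1 p.2.2
  /-- (R4) `∂_z F̄` and `1/∂_z F̄` are bounded on `D_{ε,1/ε}`. -/
  FbarZ_bdd : ∀ ε ∈ Set.Ioc (0 : ℝ) S.eps0, ∃ C > (0 : ℝ),
      ∀ p ∈ S.DepsK ε (1 / ε),
        S.FbarZ p.1 p.2.1 p.2.2 ≤ C ∧ 1 / C ≤ S.FbarZ p.1 p.2.1 p.2.2
  /-- (R5) `F` is uniformly continuous on `D_ε`. -/
  F_unifCont : ∀ ε ∈ Set.Ioc (0 : ℝ) S.eps0,
      UniformContinuousOn (fun p : ℝ × ℝ × ℝ => (S.F p.1 p.2.1 p.2.2).toReal) (S.Deps ε)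
  /-- (R5) `D_ε = {z ≤ γ̄_ε(t,x)}` for a continuous `γ̄_ε`. -/
  Deps_eq : ∀ ε ∈ Set.Ioc (0 : ℝ) S.eps0, ∃ γε : ℝ → ℝ → ℝ,
      Continuous (fun p : ℝ × ℝ => γε p.1 p.2) ∧
      S.Deps ε = {p : ℝ × ℝ × ℝ | p.1 ∈ Set.Icc 0 S.T ∧ p.2.2 ≤ γε p.1 p.2.1}

/-- The solution hypotheses of Proposition 3.6: `Φ` is a `C²` terminal condition with
`|Φ''| ≤ K_Φ` and `(T,·,Φ'') ∈ D_{ε_Φ}`, and `u` is a classical `C^{1,4}` solution of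
`∂ₜu + F̄(·,∂²ₓu) = 0` on `[0,T) × ℝ` with `u(T,·) = Φ`, `|∂²ₓu| ≤ K'` and
`(·,∂²ₓu) ∈ D_{ε'}`. -/
structure SolHyp (S : Standing) (KΦ εΦ : ℝ) (Φ : ℝ → ℝ) (K' ε' : ℝ)
    (u : ℝ → ℝ → ℝ) : Prop where
  KPhi_pos : 0 < KΦ
  epsPhi_mem : εΦ ∈ Set.Ioc (0 : ℝ) S.eps0
  Phi_C2 : ContDiff ℝ 2 Φ
  Phi_xx_bdd : ∀ x, |iteratedDeriv 2 Φ x| ≤ KΦ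
  Phi_dom : ∀ x, (S.T, x, iteratedDeriv 2 Φ x) ∈ S.Deps εΦ
  K'_pos : 0 < K'
  eps'_mem : ε' ∈ Set.Ioc (0 : ℝ) S.eps0
  u_cont : ContinuousOn (fun p : ℝ × ℝ => u p.1 p.2) (Set.Icc 0 S.T ×ˢ Set.univ)
  u_C4x : ∀ t ∈ Set.Ico (0 : ℝ) S.T, ContDiff ℝ 4 fun y => u t y
  u_derivs_cont : ∀ n : ℕ, n ≤ 4 → ContinuousOn
      (fun p : ℝ × ℝ => iteratedDeriv n (fun y => u p.1 y) p.2)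
      (Set.Ico 0 S.T ×ˢ Set.univ)
  u_C2x_T : ContDiff ℝ 2 fun y => u S.T y
  u_derivs2_cont : ∀ n : ℕ, n ≤ 2 → ContinuousOn
      (fun p : ℝ × ℝ => iteratedDeriv n (fun y => u p.1 y) p.2)
      (Set.Icc 0 S.T ×ˢ Set.univ)
  uxx_bdd : ∀ t ∈ Set.Icc (0 : ℝ) S.T, ∀ x, |d2x u t x| ≤ K'
  u_dom : ∀ t ∈ Set.Icc (0 : ℝ) S.T, ∀ x, (t, x, d2x u t x) ∈ S.Deps ε'
  pde : ∀ t ∈ Set.Ico (0 : ℝ) S.T, ∀ x,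
      HasDerivWithinAt (fun s => u s x) (-(S.Fbar t x (d2x u t x))) (Set.Ico 0 S.T) t
  terminal : ∀ x, u S.T x = Φ x

end Standing

open Topology in
set_option maxHeartbeats 3200000 in
/-- **Proposition 3.6.c** (propagation of Lipschitz regularity).
Under the standing assumptions and the solution hypotheses, if `Φ` is globally Lipschitz
with constant `L > 0`, then `x ↦ u(t,x)` is `L`-Lipschitz for every `t ∈ [0,T]`. -/
theorem lipschitz_propagation (S : Standing) (hS : S.Hyp)
    (KΦ εΦ : ℝ) (Φ : ℝ → ℝ) (K' ε' : ℝ) (u : ℝ → ℝ → ℝ)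
    (hsol : Standing.SolHyp S KΦ εΦ Φ K' ε' u)
    (L : ℝ) (hL : 0 < L) (hLip : ∀ x x' : ℝ, |Φ x - Φ x'| ≤ L * |x - x'|) :
    ∀ t ∈ Set.Icc (0 : ℝ) S.T, ∀ x x' : ℝ, |u t x - u t x'| ≤ L * |x - x'| := by

  obtain ⟨hε'pos, hε'le⟩ := hsol.eps'_mem
  have hT0 : (0:ℝ) ≤ S.T := S.T_pos.le
  have hK' := hsol.K'_pos
  set ε : ℝ := min ε' (1 / K') with hεdef
  have hεpos : 0 < ε := lt_min hε'pos (one_div_pos.mpr hK')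
  have hεmem : ε ∈ Set.Ioc (0:ℝ) S.eps0 := ⟨hεpos, le_trans (min_le_left _ _) hε'le⟩
  obtain ⟨CZ, hCZpos, hCZ⟩ := hS.FbarZ_bdd ε hεmem
  obtain ⟨γ, hγcont, hγset⟩ := hS.Deps_eq ε' ⟨hε'pos, hε'le⟩
  have hsub1 : S.Deps ε' ⊆ S.Deps ε := by
    intro p hp
    refine ⟨hp.1, le_trans hp.2 ?_⟩
    have h1 : (1:ℝ)/ε' ≤ 1/ε := one_div_le_one_div_of_le hεpos (min_le_left _ _)
    exact_mod_cast h1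
  have hK'ε : K' ≤ 1/ε := by
    have h1 : ε ≤ 1/K' := min_le_right _ _
    have h2 := one_div_le_one_div_of_le hεpos h1
    rwa [one_div_one_div] at h2
  have hγ0 : ∀ t ∈ Set.Icc (0:ℝ) S.T, ∀ x : ℝ, 0 ≤ γ t x := by
    intro t ht x
    have hm : ((t,x,(0:ℝ)) : ℝ×ℝ×ℝ) ∈ S.Deps ε' := by
      refine ⟨ht, ?_⟩
      show S.F t x 0 ≤ _
      rw [(hS.F_zero t ht x).1]
      exact_mod_cast (by positivity : (0:ℝ) ≤ 1/ε')
    rw [hγset] at hm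
    exact hm.2
  have hγZ : ∀ t ∈ Set.Icc (0:ℝ) S.T, ∀ x : ℝ, d2x u t x ≤ γ t x := by
    intro t ht x
    have hm := hsol.u_dom t ht x
    rw [hγset] at hm
    exact hm.2
  have hseg : ∀ t ∈ Set.Icc (0:ℝ) S.T, ∀ x z : ℝ,
      min 0 (d2x u t x) ≤ z → z ≤ max 0 (d2x u t x) → (t,x,z) ∈ S.DepsK ε (1/ε) := by
    intro t ht x z h1 h2
    have hZK : |d2x u t x| ≤ K' := hsol.uxx_bdd t ht x
    have hDeps : ((t,x,z) : ℝ×ℝ×ℝ) ∈ S.Deps ε' := by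
      rw [hγset]
      exact ⟨ht, le_trans h2 (max_le (hγ0 t ht x) (hγZ t ht x))⟩
    refine ⟨hsub1 hDeps, ?_⟩
    show |z| ≤ 1/ε
    have habs : |z| ≤ |d2x u t x| := by
      rw [abs_le]
      constructor
      · refine le_trans ?_ h1
        exact le_min (neg_nonpos.mpr (abs_nonneg _)) (neg_abs_le _)
      · refine le_trans h2 ?_
        exact max_le (abs_nonneg _) (le_abs_self _)
    linarith
  have hDepsD : S.Deps ε ⊆ S.D := fun p hp => ⟨hp.1, lt_of_le_of_lt hp.2 (EReal.coe_lt_top _)⟩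
  -- slope representation of Fbar along the solution graph
  have hslope : ∀ t ∈ Set.Icc (0:ℝ) S.T, ∀ x : ℝ, ∃ c : ℝ, 0 < c ∧ c ≤ CZ ∧
      S.Fbar t x (d2x u t x) = c * d2x u t x := by
    intro t ht x
    rcases lt_trichotomy (d2x u t x) 0 with hlt | heq | hgt
    · have hmem : ∀ w ∈ Set.Icc (d2x u t x) 0, (t,x,w) ∈ S.DepsK ε (1/ε) := by
        intro w hw
        exact hseg t ht x w (by rw [min_eq_right hlt.le]; exact hw.1)
          (by rw [max_eq_left hlt.le]; exact hw.2)
      have hcont : ContinuousOn (fun w => S.Fbar t x w) (Set.Icc (d2x u t x) 0) := by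
        intro w hw
        exact ((hS.Fbar_dZ (t,x,w) (hDepsD (hmem w hw).1)).continuousAt).continuousWithinAt
      have hderiv : ∀ w ∈ Set.Ioo (d2x u t x) 0,
          HasDerivAt (fun w => S.Fbar t x w) (S.FbarZ t x w) w := by
        intro w hw
        exact hS.Fbar_dZ (t,x,w) (hDepsD (hmem w ⟨hw.1.le, hw.2.le⟩).1)
      obtain ⟨ξ, hξ, hξeq⟩ := exists_hasDerivAt_eq_slope (fun w => S.Fbar t x w)
        (fun w => S.FbarZ t x w) hlt hcont hderiv
      have hξm : ((t,x,ξ) : ℝ×ℝ×ℝ) ∈ S.DepsK ε (1/ε) := hmem ξ ⟨hξ.1.le, hξ.2.le⟩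
      refine ⟨S.FbarZ t x ξ, hS.FbarZ_pos ε hεmem (t,x,ξ) hξm.1, (hCZ (t,x,ξ) hξm).1, ?_⟩
      rw [(hS.F_zero t ht x).2] at hξeq
      have hne : d2x u t x ≠ 0 := ne_of_lt hlt
      rw [hξeq]
      field_simp
      ring
    · refine ⟨CZ, hCZpos, le_rfl, ?_⟩
      rw [heq, (hS.F_zero t ht x).2, mul_zero]
    · have hmem : ∀ w ∈ Set.Icc (0:ℝ) (d2x u t x), (t,x,w) ∈ S.DepsK ε (1/ε) := by
        intro w hw
        exact hseg t ht x w (by rw [min_eq_left hgt.le]; exact hw.1)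
          (by rw [max_eq_right hgt.le]; exact hw.2)
      have hcont : ContinuousOn (fun w => S.Fbar t x w) (Set.Icc (0:ℝ) (d2x u t x)) := by
        intro w hw
        exact ((hS.Fbar_dZ (t,x,w) (hDepsD (hmem w hw).1)).continuousAt).continuousWithinAt
      have hderiv : ∀ w ∈ Set.Ioo (0:ℝ) (d2x u t x),
          HasDerivAt (fun w => S.Fbar t x w) (S.FbarZ t x w) w := by
        intro w hw
        exact hS.Fbar_dZ (t,x,w) (hDepsD (hmem w ⟨hw.1.le, hw.2.le⟩).1)
      obtain ⟨ξ, hξ, hξeq⟩ := exists_hasDerivAt_eq_slope (fun w => S.Fbar t x w)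
        (fun w => S.FbarZ t x w) hgt hcont hderiv
      have hξm : ((t,x,ξ) : ℝ×ℝ×ℝ) ∈ S.DepsK ε (1/ε) := hmem ξ ⟨hξ.1.le, hξ.2.le⟩
      refine ⟨S.FbarZ t x ξ, hS.FbarZ_pos ε hεmem (t,x,ξ) hξm.1, (hCZ (t,x,ξ) hξm).1, ?_⟩
      rw [(hS.F_zero t ht x).2] at hξeq
      have hne : d2x u t x ≠ 0 := ne_of_gt hgt
      rw [hξeq]
      field_simp
      ring
  have hucont : ∀ x : ℝ, ContinuousOn (fun s => u s x) (Set.Icc (0:ℝ) S.T) := by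
    intro x
    exact hsol.u_cont.comp (Continuous.continuousOn (by fun_prop))
      (fun s hs => Set.mk_mem_prod hs (mem_univ _))
  -- Step 1 : crude bound in time
  have hstep1 : ∀ t ∈ Set.Icc (0:ℝ) S.T, ∀ x : ℝ,
      |u t x - Φ x| ≤ CZ * K' * (S.T - t) := by
    intro t ht x
    rcases eq_or_lt_of_le ht.2 with hTeq | hlt
    · simp [hTeq, hsol.terminal x]
    · have hkey : ∀ τ ∈ Set.Ico t S.T, |u τ x - u t x| ≤ CZ * K' * (τ - t) := by
        intro τ hτ
        have hsub : Set.Icc t τ ⊆ Set.Ico 0 S.T := fun s hs =>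
          ⟨le_trans ht.1 hs.1, lt_of_le_of_lt hs.2 hτ.2⟩
        have hderiv : ∀ s ∈ Set.Icc t τ, HasDerivWithinAt (fun s' => u s' x)
            (-(S.Fbar s x (d2x u s x))) (Set.Icc t τ) s := fun s hs =>
          (hsol.pde s (hsub hs) x).mono hsub
        have hbound : ∀ s ∈ Set.Icc t τ, ‖-(S.Fbar s x (d2x u s x))‖ ≤ CZ * K' := by
          intro s hs
          have hsI : s ∈ Set.Icc (0:ℝ) S.T := ⟨(hsub hs).1, (hsub hs).2.le⟩
          obtain ⟨c, hc0, hcC, hceq⟩ := hslope s hsI x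
          rw [Real.norm_eq_abs, abs_neg, hceq, abs_mul, abs_of_pos hc0]
          exact mul_le_mul hcC (hsol.uxx_bdd s hsI x) (abs_nonneg _) hCZpos.le
        have hmvt := (convex_Icc t τ).norm_image_sub_le_of_norm_hasDerivWithin_le hderiv
          hbound ⟨le_rfl, hτ.1⟩ ⟨hτ.1, le_rfl⟩
        rw [Real.norm_eq_abs, Real.norm_eq_abs, abs_of_nonneg (sub_nonneg.mpr hτ.1)] at hmvt
        exact hmvt
      haveI : (𝓝[Set.Ioo t S.T] S.T).NeBot := by
        apply mem_closure_iff_nhdsWithin_neBot.mp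
        rw [closure_Ioo (ne_of_lt hlt)]
        exact ⟨hlt.le, le_rfl⟩
      have hA : Tendsto (fun τ => |u τ x - u t x|) (𝓝[Set.Ioo t S.T] S.T)
          (𝓝 |u S.T x - u t x|) := by
        have h1 : Tendsto (fun s => u s x) (𝓝[Set.Ioo t S.T] S.T) (𝓝 (u S.T x)) := by
          have h2 := ((hucont x).continuousWithinAt ⟨hT0, le_rfl⟩).tendsto
          exact h2.mono_left (nhdsWithin_mono _ (fun s hs => ⟨le_trans ht.1 hs.1.le, hs.2.le⟩))
        exact (h1.sub tendsto_const_nhds).abs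
      have hB : Tendsto (fun τ => CZ * K' * (τ - t)) (𝓝[Set.Ioo t S.T] S.T)
          (𝓝 (CZ * K' * (S.T - t))) := by
        apply Tendsto.mono_left _ nhdsWithin_le_nhds
        exact ((continuous_const.mul (continuous_id.sub continuous_const)).tendsto S.T)
      have hle := le_of_tendsto_of_tendsto hA hB ?_
      · rwa [hsol.terminal x, abs_sub_comm] at hle
      · filter_upwards [eventually_mem_nhdsWithin] with τ hτ
        exact hkey τ ⟨hτ.1.le, hτ.2⟩
  -- Step 2 : crude Lipschitz-type bound
  have hstep2 : ∀ t ∈ Set.Icc (0:ℝ) S.T, ∀ y x : ℝ, y ≤ x →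
      |u t x - u t y| ≤ L * (x - y) + 2 * (CZ * K') * (S.T - t) := by
    intro t ht y x hxy
    have h1 := hstep1 t ht x
    have h2 := hstep1 t ht y
    have h3 : |Φ x - Φ y| ≤ L * (x - y) := by
      have h4 := hLip x y
      rwa [abs_of_nonneg (sub_nonneg.mpr hxy)] at h4
    have h5 : |u t x - u t y| ≤ |u t x - Φ x| + |Φ x - Φ y| + |Φ y - u t y| := by
      have := abs_sub_le (u t x) (Φ x) (u t y)
      have := abs_sub_le (Φ x) (Φ y) (u t y)
      linarith
    have h6 : |Φ y - u t y| = |u t y - Φ y| := abs_sub_comm _ _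
    linarith
  -- Main one-sided estimate
  have hmain : ∀ σ : ℝ, σ = 1 ∨ σ = -1 → ∀ t₀ ∈ Set.Icc (0:ℝ) S.T, ∀ y₀ x₀ : ℝ, y₀ ≤ x₀ →
      σ * (u t₀ x₀ - u t₀ y₀) ≤ L * (x₀ - y₀) := by
    intro σ hσ t₀ ht₀ y₀ x₀ hxy₀
    have hσabs : ∀ a : ℝ, σ * a ≤ |a| := by
      intro a
      rcases hσ with h | h <;> rw [h]
      · rw [one_mul]; exact le_abs_self a
      · rw [neg_one_mul]; exact neg_le_abs a
    have hΘσ : ∀ t ∈ Set.Icc (0:ℝ) S.T, ∀ y x : ℝ, y ≤ x →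
        σ * (u t x - u t y) - L * (x - y) ≤ 2 * (CZ * K') * (S.T - t) := by
      intro t ht y x hxy
      have h1 := hstep2 t ht y x hxy
      have h2 := hσabs (u t x - u t y)
      linarith
    rcases eq_or_lt_of_le ht₀.2 with hTeq | htlt
    · have h3 : |Φ x₀ - Φ y₀| ≤ L * (x₀ - y₀) := by
        have h4 := hLip x₀ y₀
        rwa [abs_of_nonneg (sub_nonneg.mpr hxy₀)] at h4
      rw [hTeq, hsol.terminal, hsol.terminal]
      exact le_trans (hσabs _) h3
    · by_contra hcon
      push_neg at hcon
      set η : ℝ := σ * (u t₀ x₀ - u t₀ y₀) - L * (x₀ - y₀) with hηdef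
      have hη : 0 < η := sub_pos.mpr hcon
      set CB : ℝ := CZ * K' with hCBdef
      have hCB : 0 < CB := mul_pos hCZpos hK'
      set τ : ℝ := max ((t₀ + S.T)/2) (S.T - η/(8*CB + 1)) with hτdef
      have hτ1 : t₀ < τ := lt_of_lt_of_le (by linarith) (le_max_left _ _)
      have hτ2 : τ < S.T := by
        apply max_lt (by linarith)
        have : 0 < η/(8*CB + 1) := by positivity
        linarith
      have hτ3 : 2 * CB * (S.T - τ) ≤ η/4 := by
        have h1 : S.T - η/(8*CB + 1) ≤ τ := le_max_right _ _
        have h2 : S.T - τ ≤ η/(8*CB + 1) := by linarith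
        have h3 : 2*CB*(S.T - τ) ≤ 2*CB*(η/(8*CB + 1)) :=
          mul_le_mul_of_nonneg_left h2 (by positivity)
        have h4 : 2*CB*(η/(8*CB + 1)) ≤ η/4 := by
          have he : 2*CB*(η/(8*CB + 1)) = 2*CB*η/(8*CB + 1) := by ring
          rw [he, div_le_div_iff₀ (by positivity) (by norm_num : (0:ℝ) < 4)]
          nlinarith [mul_pos hCB hη]
        linarith
      set δ : ℝ := η/(20*CZ*(S.T+1) + 1) with hδdef
      have hδ : 0 < δ := by positivity
      set K : ℝ := 5*CZ*δ with hKdef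
      have hK0 : 0 < K := by positivity
      have hKτ : K * (τ - t₀) ≤ η/4 := by
        have h1 : τ - t₀ ≤ S.T := by
          have := ht₀.1
          linarith [hτ2.le]
        have h2 : K*(τ - t₀) ≤ K*S.T := mul_le_mul_of_nonneg_left h1 hK0.le
        have h3 : K*S.T ≤ η/4 := by
          rw [hKdef, hδdef]
          have he : 5*CZ*(η/(20*CZ*(S.T+1) + 1))*S.T = 5*CZ*η*S.T/(20*CZ*(S.T+1) + 1) := by
            ring
          rw [he, div_le_div_iff₀ (by positivity) (by norm_num : (0:ℝ) < 4)]
          nlinarith [mul_pos hCZpos hη, mul_nonneg (mul_nonneg hCZpos.le hη.le) hT0]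
        linarith
      set Ψ : ℝ×ℝ×ℝ → ℝ := fun q =>
        σ*(u q.1 q.2.1 - u q.1 q.2.2) - L*(q.2.1 - q.2.2)
          - δ*((q.2.1 - x₀)^2 + (q.2.2 - y₀)^2) - K*(τ - q.1) with hΨdef
      have hΨval : ∀ t x y : ℝ, Ψ (t,x,y) = σ*(u t x - u t y) - L*(x - y)
          - δ*((x - x₀)^2 + (y - y₀)^2) - K*(τ - t) := by
        intro t x y
        rw [hΨdef]
      set V : ℝ := Ψ (t₀, x₀, y₀) with hVdef
      have hVeq : V = σ*(u t₀ x₀ - u t₀ y₀) - L*(x₀ - y₀) - K*(τ - t₀) := by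
        rw [hVdef, hΨval]
        ring
      set R : ℝ := Real.sqrt (max ((2*CB*S.T - V + 1)/δ) 1) with hRdef
      have hR0 : 0 ≤ R := Real.sqrt_nonneg _
      have hRsq : 2*CB*S.T - V + 1 ≤ δ*R^2 := by
        have h1 : R^2 = max ((2*CB*S.T - V + 1)/δ) 1 :=
          Real.sq_sqrt (le_trans zero_le_one (le_max_right _ _))
        rw [h1]
        have h2 : (2*CB*S.T - V + 1)/δ ≤ max ((2*CB*S.T - V + 1)/δ) 1 := le_max_left _ _
        have h3 : δ*((2*CB*S.T - V + 1)/δ) ≤ δ*(max ((2*CB*S.T - V + 1)/δ) 1) :=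
          mul_le_mul_of_nonneg_left h2 hδ.le
        rw [mul_div_cancel₀ _ (ne_of_gt hδ)] at h3
        exact h3
      set Ω : Set (ℝ×ℝ×ℝ) :=
        (Set.Icc t₀ τ ×ˢ (Set.Icc (x₀-R) (x₀+R) ×ˢ Set.Icc (y₀-R) (y₀+R)))
          ∩ {q : ℝ×ℝ×ℝ | q.2.2 ≤ q.2.1} with hΩdef
      have hmemΩ : ∀ t x y : ℝ, t ∈ Set.Icc t₀ τ → x ∈ Set.Icc (x₀-R) (x₀+R) →
          y ∈ Set.Icc (y₀-R) (y₀+R) → y ≤ x → (t,x,y) ∈ Ω := by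
        intro t x y h1 h2 h3 h4
        exact ⟨Set.mk_mem_prod h1 (Set.mk_mem_prod h2 h3), h4⟩
      have hΩc : IsCompact Ω := by
        rw [hΩdef]
        exact ((isCompact_Icc).prod ((isCompact_Icc).prod isCompact_Icc)).inter_right
          (isClosed_le (by fun_prop) (by fun_prop))
      have hq₀ : ((t₀,x₀,y₀) : ℝ×ℝ×ℝ) ∈ Ω :=
        hmemΩ t₀ x₀ y₀ ⟨le_rfl, hτ1.le⟩ ⟨by linarith, by linarith⟩ ⟨by linarith, by linarith⟩ hxy₀
      have hΩsub : ∀ q ∈ Ω, q.1 ∈ Set.Icc (0:ℝ) S.T := fun q hq =>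
        ⟨le_trans ht₀.1 hq.1.1.1, le_trans hq.1.1.2 hτ2.le⟩
      have hΨcont : ContinuousOn Ψ Ω := by
        have hu1 : ContinuousOn (fun q : ℝ×ℝ×ℝ => u q.1 q.2.1) Ω :=
          hsol.u_cont.comp (Continuous.continuousOn (by fun_prop))
            (fun q hq => Set.mk_mem_prod (hΩsub q hq) (mem_univ _))
        have hu2 : ContinuousOn (fun q : ℝ×ℝ×ℝ => u q.1 q.2.2) Ω :=
          hsol.u_cont.comp (Continuous.continuousOn (by fun_prop))
            (fun q hq => Set.mk_mem_prod (hΩsub q hq) (mem_univ _))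
        rw [hΨdef]
        exact (((continuousOn_const.mul (hu1.sub hu2)).sub
          (Continuous.continuousOn (by fun_prop))).sub
          (Continuous.continuousOn (by fun_prop))).sub
          (Continuous.continuousOn (by fun_prop))
      obtain ⟨qs, hqsΩ, hqsmax⟩ := hΩc.exists_isMaxOn ⟨_, hq₀⟩ hΨcont
      obtain ⟨ts, xs, ys⟩ := qs
      have hts : ts ∈ Set.Icc t₀ τ := hqsΩ.1.1
      have hxs : xs ∈ Set.Icc (x₀-R) (x₀+R) := hqsΩ.1.2.1
      have hys : ys ∈ Set.Icc (y₀-R) (y₀+R) := hqsΩ.1.2.2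
      have hyxs : ys ≤ xs := hqsΩ.2
      have htsI : ts ∈ Set.Icc (0:ℝ) S.T := ⟨le_trans ht₀.1 hts.1, le_trans hts.2 hτ2.le⟩
      have hVle : V ≤ Ψ (ts,xs,ys) := hqsmax hq₀
      have hθs : σ*(u ts xs - u ts ys) - L*(xs - ys) ≤ 2*CB*S.T := by
        have h1 := hΘσ ts htsI ys xs hyxs
        have h2 : 2*CB*(S.T - ts) ≤ 2*CB*S.T :=
          mul_le_mul_of_nonneg_left (by linarith [htsI.1]) (by positivity)
        linarith
      have hKts : 0 ≤ K*(τ - ts) := mul_nonneg hK0.le (by linarith [hts.2])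
      have hxlt : (xs - x₀)^2 < R^2 := by
        by_contra hcon2
        push_neg at hcon2
        have hpen : δ*R^2 ≤ δ*(xs - x₀)^2 := mul_le_mul_of_nonneg_left hcon2 hδ.le
        have hΨub : Ψ (ts,xs,ys) ≤ 2*CB*S.T - δ*R^2 := by
          rw [hΨval]
          have h2 : 0 ≤ δ*(ys - y₀)^2 := by positivity
          linarith [hθs, hpen, hKts]
        linarith [hVle, hRsq]
      have hylt : (ys - y₀)^2 < R^2 := by
        by_contra hcon2
        push_neg at hcon2
        have hpen : δ*R^2 ≤ δ*(ys - y₀)^2 := mul_le_mul_of_nonneg_left hcon2 hδ.le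
        have hΨub : Ψ (ts,xs,ys) ≤ 2*CB*S.T - δ*R^2 := by
          rw [hΨval]
          have h2 : 0 ≤ δ*(xs - x₀)^2 := by positivity
          linarith [hθs, hpen, hKts]
        linarith [hVle, hRsq]
      have hVfinal : V ≤ 2*CB*(S.T - τ) := by
        rcases eq_or_lt_of_le hyxs with hxyeq | hxylt
        · -- xs = ys : the max value is nonpositive
          have hΨub : Ψ (ts,xs,ys) ≤ 0 := by
            rw [hΨval, hxyeq]
            have h2 : 0 ≤ δ*((xs - x₀)^2 + (xs - y₀)^2) := by positivity
            nlinarith [hKts]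
          have h3 : 0 ≤ 2*CB*(S.T - τ) :=
            mul_nonneg (by positivity) (by linarith [hτ2.le])
          linarith
        · rcases eq_or_lt_of_le hts.2 with htseq | htslt
          · -- ts = τ : terminal estimate
            have h1 := hΘσ ts htsI ys xs hyxs
            rw [htseq] at h1
            have hΨub : Ψ (ts,xs,ys) ≤ 2*CB*(S.T - τ) := by
              rw [hΨval, htseq]
              have h2 : 0 ≤ δ*((xs - x₀)^2 + (ys - y₀)^2) := by positivity
              linarith [h1, h2]
            linarith
          · -- interior maximum : contradiction
            exfalso
            have htsIco : ts ∈ Set.Ico (0:ℝ) S.T := ⟨htsI.1, lt_trans htslt hτ2⟩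
            have huC2 : ContDiff ℝ 2 (fun y => u ts y) :=
              (hsol.u_C4x ts htsIco).of_le (by norm_num)
            have hd2eq : ∀ a : ℝ, d2x u ts a = deriv (deriv (fun y => u ts y)) a := by
              intro a
              show iteratedDeriv 2 (fun y => u ts y) a = _
              rw [show (2:ℕ) = 1+1 from rfl, iteratedDeriv_succ, iteratedDeriv_one]
            -- x-direction second derivative test
            have hA : σ * d2x u ts xs ≤ 2*δ := by
              have hψC2 : ContDiff ℝ 2 (fun x => σ * u ts x - (L * x + δ * (x - x₀)^2)) :=
                (contDiff_const.mul huC2).sub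
                  ((contDiff_const.mul contDiff_id).add
                    (contDiff_const.mul ((contDiff_id.sub contDiff_const).pow 2)))
              have hUopen : IsOpen {x : ℝ | (x - x₀)^2 < R^2 ∧ ys < x} := by
                rw [Set.setOf_and]
                exact (isOpen_lt (by fun_prop) continuous_const).inter isOpen_Ioi
              have hxU : xs ∈ {x : ℝ | (x - x₀)^2 < R^2 ∧ ys < x} := ⟨hxlt, hxylt⟩
              have hloc : IsLocalMax (fun x => σ * u ts x - (L * x + δ * (x - x₀)^2)) xs := by
                filter_upwards [hUopen.mem_nhds hxU] with x hx
                obtain ⟨hx1, hx2⟩ := hx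
                obtain ⟨hxa, hxb⟩ := sq_helper hx1.le hR0
                have hmem : ((ts,x,ys) : ℝ×ℝ×ℝ) ∈ Ω :=
                  hmemΩ ts x ys hts ⟨by linarith, by linarith⟩ hys hx2.le
                have h : Ψ (ts,x,ys) ≤ Ψ (ts,xs,ys) := hqsmax hmem
                rw [hΨval, hΨval] at h
                linarith [h]
              have h2nd := second_deriv_test hψC2 hloc
              have hcomb : deriv (deriv (fun x => σ * u ts x - (L * x + δ * (x - x₀)^2))) xs
                  = σ * deriv (deriv (fun y => u ts y)) xs - 2*δ :=
                deriv_deriv_comb huC2 σ L δ x₀ xs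
              rw [hcomb] at h2nd
              rw [hd2eq]
              linarith
            -- y-direction second derivative test
            have hB : -(2*δ) ≤ σ * d2x u ts ys := by
              have hψC2 : ContDiff ℝ 2 (fun y => (-σ) * u ts y - ((-L) * y + δ * (y - y₀)^2)) :=
                (contDiff_const.mul huC2).sub
                  ((contDiff_const.mul contDiff_id).add
                    (contDiff_const.mul ((contDiff_id.sub contDiff_const).pow 2)))
              have hUopen : IsOpen {y : ℝ | (y - y₀)^2 < R^2 ∧ y < xs} := by
                rw [Set.setOf_and]
                exact (isOpen_lt (by fun_prop) continuous_const).inter isOpen_Iio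
              have hyU : ys ∈ {y : ℝ | (y - y₀)^2 < R^2 ∧ y < xs} := ⟨hylt, hxylt⟩
              have hloc : IsLocalMax (fun y => (-σ) * u ts y - ((-L) * y + δ * (y - y₀)^2)) ys := by
                filter_upwards [hUopen.mem_nhds hyU] with y hy
                obtain ⟨hy1, hy2⟩ := hy
                obtain ⟨hya, hyb⟩ := sq_helper hy1.le hR0
                have hmem : ((ts,xs,y) : ℝ×ℝ×ℝ) ∈ Ω :=
                  hmemΩ ts xs y hts hxs ⟨by linarith, by linarith⟩ hy2.le
                have h : Ψ (ts,xs,y) ≤ Ψ (ts,xs,ys) := hqsmax hmem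
                rw [hΨval, hΨval] at h
                linarith [h]
              have h2nd := second_deriv_test hψC2 hloc
              have hcomb : deriv (deriv (fun y => (-σ) * u ts y - ((-L) * y + δ * (y - y₀)^2))) ys
                  = (-σ) * deriv (deriv (fun y => u ts y)) ys - 2*δ :=
                deriv_deriv_comb huC2 (-σ) (-L) δ y₀ ys
              rw [hcomb] at h2nd
              rw [hd2eq]
              linarith
            -- time direction test
            have hsubt : Set.Icc ts τ ⊆ Set.Ico 0 S.T := fun s hs =>
              ⟨le_trans htsI.1 hs.1, lt_of_le_of_lt hs.2 hτ2⟩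
            have hux : HasDerivWithinAt (fun t => u t xs)
                (-(S.Fbar ts xs (d2x u ts xs))) (Set.Icc ts τ) ts :=
              (hsol.pde ts htsIco xs).mono hsubt
            have huy : HasDerivWithinAt (fun t => u t ys)
                (-(S.Fbar ts ys (d2x u ts ys))) (Set.Icc ts τ) ts :=
              (hsol.pde ts htsIco ys).mono hsubt
            have hFd : HasDerivWithinAt (fun t => σ*(u t xs - u t ys) + K*t)
                (σ*(-(S.Fbar ts xs (d2x u ts xs)) - -(S.Fbar ts ys (d2x u ts ys))) + K*1)
                (Set.Icc ts τ) ts :=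
              ((hux.sub huy).const_mul σ).add ((hasDerivWithinAt_id ts _).const_mul K)
            have hmax' : ∀ t ∈ Set.Icc ts τ,
                (fun t => σ*(u t xs - u t ys) + K*t) t
                  ≤ (fun t => σ*(u t xs - u t ys) + K*t) ts := by
              intro t htm
              have hmem : ((t,xs,ys) : ℝ×ℝ×ℝ) ∈ Ω :=
                hmemΩ t xs ys ⟨le_trans hts.1 htm.1, htm.2⟩ hxs hys hyxs
              have h : Ψ (t,xs,ys) ≤ Ψ (ts,xs,ys) := hqsmax hmem
              rw [hΨval, hΨval] at h
              show σ*(u t xs - u t ys) + K*t ≤ σ*(u ts xs - u ts ys) + K*ts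
              linarith [h]
            have hd0 := deriv_nonpos_right htslt hFd hmax'
            obtain ⟨cx, hcx0, hcxC, hcxeq⟩ := hslope ts htsI xs
            obtain ⟨cy, hcy0, hcyC, hcyeq⟩ := hslope ts htsI ys
            rw [hcxeq, hcyeq] at hd0
            have f1 : cx*(σ*(d2x u ts xs)) ≤ cx*(2*δ) :=
              mul_le_mul_of_nonneg_left hA hcx0.le
            have f2 : cx*(2*δ) ≤ CZ*(2*δ) :=
              mul_le_mul_of_nonneg_right hcxC (by positivity)
            have f3 : cy*(-(2*δ)) ≤ cy*(σ*(d2x u ts ys)) :=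
              mul_le_mul_of_nonneg_left hB hcy0.le
            have f4 : CZ*(-(2*δ)) ≤ cy*(-(2*δ)) :=
              mul_le_mul_of_nonpos_right hcyC (by linarith)
            have hve : σ*(-(cx * d2x u ts xs) - -(cy * d2x u ts ys)) + K*1
                = -(cx*(σ*(d2x u ts xs))) + cy*(σ*(d2x u ts ys)) + K := by ring
            rw [hve, hKdef] at hd0
            have hCZδ : 0 < CZ*δ := by positivity
            linarith [hd0, f1, f2, f3, f4, hCZδ]
      -- conclude the contradiction with hcon
      rw [hVeq] at hVfinal
      have hfin : η ≤ η/4 + η/4 := by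
        rw [hηdef]
        linarith [hτ3, hKτ]
      linarith
  -- Final assembly
  intro t ht x x'
  rcases le_total x' x with h | h
  · have h1 := hmain 1 (Or.inl rfl) t ht x' x h
    have h2 := hmain (-1) (Or.inr rfl) t ht x' x h
    rw [abs_of_nonneg (sub_nonneg.mpr h)]
    rw [one_mul] at h1
    rw [neg_one_mul] at h2
    rw [abs_le]
    constructor <;> linarith
  · have h1 := hmain 1 (Or.inl rfl) t ht x x' h
    have h2 := hmain (-1) (Or.inr rfl) t ht x x' h
    rw [abs_sub_comm, abs_sub_comm x x']
    rw [abs_of_nonneg (sub_nonneg.mpr h)]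
    rw [one_mul] at h1
    rw [neg_one_mul] at h2
    rw [abs_le]
    constructor <;> linarith
end
end

section
/- Uniqueness of classical solutions (Proposition 3.6.d): Under the standing assumptions and the solution hypotheses, u is the unique solution in the following class: if u' :[0,T]×ℝ→ℝ is continuous, ∂ₜu', ∂ₓu', ∂²ₓu' exist and are continuous on [0,T)×ℝ, ∂²ₓu' is bounded, (t,x,∂²ₓu'(t,x))∈D_{ε''} for all (t,x)∈[0,T)×ℝ and some ε''∈(0,ε₀], and u' satisfies ∂ₜu'(t,x)+F̄(t,x,∂²ₓu'(t,x))=0 on [0,T)×ℝ with u'(T,·)=Φ, then u'=u on [0,T]×ℝ. -/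
open Set Filter

noncomputable section

/-- If a function has positive right-derivative at `t₀ ∈ [0,T)` within `[0,T)`, it cannot
have a maximum over `[0,T]` at `t₀`. -/
lemma no_max_of_pos_right_deriv {F : ℝ → ℝ} {T t₀ d : ℝ} (ht : t₀ ∈ Set.Ico 0 T)
    (hd : HasDerivWithinAt F d (Set.Ico 0 T) t₀) (hdp : 0 < d)
    (hmax : ∀ s ∈ Set.Icc 0 T, F s ≤ F t₀) : False := by
  have hsub : Set.Ioo t₀ T ⊆ Set.Ico 0 T := fun s hs => ⟨le_trans ht.1 hs.1.le, hs.2⟩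
  have hd' : HasDerivWithinAt F d (Set.Ioo t₀ T) t₀ := hd.mono hsub
  have hslope := hasDerivWithinAt_iff_tendsto_slope.mp hd'
  have hNe : (nhdsWithin t₀ (Set.Ioo t₀ T \ {t₀})).NeBot := by
    rw [← mem_closure_iff_nhdsWithin_neBot]
    have : Set.Ioo t₀ T \ {t₀} = Set.Ioo t₀ T := by
      ext y; simp only [Set.mem_diff, Set.mem_singleton_iff, Set.mem_Ioo]
      constructor
      · exact fun h => h.1
      · exact fun h => ⟨h, ne_of_gt h.1⟩
    rw [this, closure_Ioo (ne_of_lt ht.2)]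
    exact ⟨le_refl _, ht.2.le⟩
  have hev : ∀ᶠ s in nhdsWithin t₀ (Set.Ioo t₀ T \ {t₀}), 0 < slope F t₀ s :=
    hslope.eventually_const_lt hdp
  have hmem : ∀ᶠ s in nhdsWithin t₀ (Set.Ioo t₀ T \ {t₀}), s ∈ Set.Ioo t₀ T \ {t₀} :=
    eventually_mem_nhdsWithin
  obtain ⟨s, hs1, hs2⟩ := (hev.and hmem).exists
  have hst : t₀ < s := hs2.1.1
  have : 0 < F s - F t₀ := by
    have := hs1
    rw [slope_def_field] at this
    have h2 : 0 < (F s - F t₀) / (s - t₀) := by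
      simpa [div_eq_iff] using this
    have h3 : 0 < s - t₀ := sub_pos.mpr hst
    rcases div_pos_iff.mp h2 with ⟨a,b⟩|⟨a,b⟩ <;> linarith
  have hFs : F s ≤ F t₀ := hmax s ⟨le_trans ht.1 hst.le, hs2.1.2.le⟩
  linarith

/-- At a global max of a `C²` function, the second derivative is nonpositive. -/
lemma second_deriv_nonpos_of_max {φ : ℝ → ℝ} {x₀ : ℝ} (hφ : ContDiff ℝ 2 φ)
    (hmax : ∀ x, φ x ≤ φ x₀) : deriv (deriv φ) x₀ ≤ 0 := by
  by_contra h
  push_neg at h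
  have hφ' : Differentiable ℝ φ ∧ ContDiff ℝ 1 (deriv φ) := by
    have := (contDiff_succ_iff_deriv (n := 1)).mp (by exact_mod_cast hφ)
    exact ⟨this.1, this.2.2⟩
  have hd1 : deriv φ x₀ = 0 := by
    have : IsLocalMax φ x₀ := by
      apply IsMaxOn.isLocalMax (s := Set.univ)
      · intro x _; exact hmax x
      · exact Filter.univ_mem
    exact this.deriv_eq_zero
  have hcont2 : Continuous (deriv (deriv φ)) := by
    have := (contDiff_succ_iff_deriv (n := 0)).mp (by exact_mod_cast hφ'.2)
    exact this.2.2.continuous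
  -- second derivative positive on a neighborhood
  obtain ⟨δ, hδ, hball⟩ := Metric.eventually_nhds_iff.mp
    (hcont2.continuousAt.eventually_const_lt h)
  -- deriv φ strictly monotone on the ball
  have hmono : StrictMonoOn (deriv φ) (Set.Ioo (x₀ - δ) (x₀ + δ)) := by
    apply strictMonoOn_of_deriv_pos (convex_Ioo _ _)
    · exact hφ'.2.continuous.continuousOn
    · intro y hy
      rw [interior_Ioo] at hy
      apply hball
      rw [Real.dist_eq, abs_lt]
      constructor <;> [linarith [hy.1]; linarith [hy.2]]
  have hx1 : x₀ ∈ Set.Ioo (x₀ - δ) (x₀ + δ) := by constructor <;> linarith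
  have hx2 : x₀ + δ/2 ∈ Set.Ioo (x₀ - δ) (x₀ + δ) := by constructor <;> linarith
  -- deriv φ > 0 on (x₀, x₀ + δ/2]
  have hpos : ∀ y ∈ Set.Ioo x₀ (x₀ + δ/2), 0 < deriv φ y := by
    intro y hy
    have : deriv φ x₀ < deriv φ y := hmono hx1
      ⟨by linarith [hy.1], by linarith [hy.2]⟩ hy.1
    linarith [this, hd1.symm.le]
  -- φ strictly monotone on [x₀, x₀+δ/2]
  have hmono2 : StrictMonoOn φ (Set.Icc x₀ (x₀ + δ/2)) := by
    apply strictMonoOn_of_deriv_pos (convex_Icc _ _)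
    · exact hφ'.1.continuous.continuousOn
    · intro y hy
      rw [interior_Icc] at hy
      exact hpos y hy
  have : φ x₀ < φ (x₀ + δ/2) := hmono2 ⟨le_refl _, by linarith⟩
    ⟨by linarith, le_refl _⟩ (by linarith)
  exact absurd (hmax (x₀ + δ/2)) (not_le.mpr this)


/-- The barrier profile `ψ(x) = eˣ + e⁻ˣ`. -/
noncomputable def psiB (x : ℝ) : ℝ := Real.exp x + Real.exp (-x)

lemma psiB_pos (x : ℝ) : 0 < psiB x := by
  unfold psiB; positivity

lemma hasDerivAt_psiB (x : ℝ) : HasDerivAt psiB (Real.exp x - Real.exp (-x)) x := by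
  have h1 : HasDerivAt Real.exp (Real.exp x) x := Real.hasDerivAt_exp x
  have h2 : HasDerivAt (fun y : ℝ => Real.exp (-y)) (-Real.exp (-x)) x := by
    have := ((hasDerivAt_id x).neg).exp
    simpa using this
  exact (h1.fun_add h2).congr_deriv (by ring)

lemma hasDerivAt_psiB' (x : ℝ) :
    HasDerivAt (fun y => Real.exp y - Real.exp (-y)) (psiB x) x := by
  have h1 : HasDerivAt Real.exp (Real.exp x) x := Real.hasDerivAt_exp x
  have h2 : HasDerivAt (fun y : ℝ => Real.exp (-y)) (-Real.exp (-x)) x := by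
    have := ((hasDerivAt_id x).neg).exp
    simpa using this
  simpa [psiB, sub_eq_add_neg] using h1.fun_sub h2

lemma deriv_psiB : deriv psiB = fun x => Real.exp x - Real.exp (-x) := by
  funext x; exact (hasDerivAt_psiB x).deriv

lemma deriv_deriv_psiB (x : ℝ) : deriv (deriv psiB) x = psiB x := by
  rw [deriv_psiB]; exact (hasDerivAt_psiB' x).deriv

lemma contDiff_psiB : ContDiff ℝ 2 psiB :=
  (Real.contDiff_exp.of_le le_top).add
    ((Real.contDiff_exp.of_le le_top).comp contDiff_neg)

lemma exp_abs_le_psiB (x : ℝ) : Real.exp |x| ≤ psiB x := by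
  rcases abs_cases x with ⟨h, _⟩ | ⟨h, _⟩ <;> rw [h] <;> unfold psiB <;>
    [linarith [Real.exp_pos (-x)]; linarith [Real.exp_pos x]]

/-- Quadratic growth bound for a `C²` function with bounded second derivative. -/
lemma growth_of_C2 {h : ℝ → ℝ} {K2 A : ℝ} (hh : ContDiff ℝ 2 h)
    (hK2 : ∀ x, |deriv (deriv h) x| ≤ K2) (h0 : |h 0| ≤ A) (h1 : |h 1| ≤ A) (hA : 0 ≤ A) :
    ∀ x, h x ≤ (3*A + 2*K2 + 1) * (1 + x^2) := by
  have hK2nn : 0 ≤ K2 := le_trans (abs_nonneg _) (hK2 0)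
  have hdiff : Differentiable ℝ h ∧ ContDiff ℝ 1 (deriv h) := by
    have := (contDiff_succ_iff_deriv (n := 1)).mp (by exact_mod_cast hh)
    exact ⟨this.1, this.2.2⟩
  have hdiff' : Differentiable ℝ (deriv h) := hdiff.2.differentiable one_ne_zero
  -- |h' x - h' y| ≤ K2 |x - y|
  have lip : ∀ x y : ℝ, |deriv h x - deriv h y| ≤ K2 * |x - y| := by
    intro x y
    have := Convex.norm_image_sub_le_of_norm_hasDerivWithin_le
      (f := deriv h) (f' := deriv (deriv h)) (s := Set.univ) (C := K2)
      (fun z _ => (hdiff'.differentiableAt.hasDerivAt).hasDerivWithinAt)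
      (fun z _ => hK2 z) convex_univ (Set.mem_univ y) (Set.mem_univ x)
    simpa [Real.norm_eq_abs] using this
  -- |h' 0| ≤ 2A + K2
  have hd0 : |deriv h 0| ≤ 2*A + K2 := by
    obtain ⟨ξ, hξ, hξ2⟩ := exists_hasDerivAt_eq_slope h (deriv h) one_pos
      hdiff.1.continuous.continuousOn
      (fun z _ => hdiff.1.differentiableAt.hasDerivAt)
    have e1 : |deriv h 0 - deriv h ξ| ≤ K2 * |0 - ξ| := lip 0 ξ
    have e2 : |0 - ξ| ≤ 1 := by
      rw [abs_sub_comm, sub_zero, abs_of_pos hξ.1]; linarith [hξ.2]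
    have e3 : |deriv h ξ| ≤ |h 1| + |h 0| := by
      rw [hξ2]; norm_num; exact abs_sub _ _
    calc |deriv h 0| ≤ |deriv h 0 - deriv h ξ| + |deriv h ξ| := by
            have := abs_sub_abs_le_abs_sub (deriv h 0) (deriv h ξ); nlinarith [abs_nonneg (deriv h 0 - deriv h ξ)]
      _ ≤ K2 * 1 + (A + A) := by
            have := mul_le_mul_of_nonneg_left e2 hK2nn
            linarith [e1, e3, h0, h1]
      _ = 2*A + K2 := by ring
  -- |h x - h 0| ≤ (|h' 0| + K2 |x|) * |x|
  have hbd : ∀ x : ℝ, |h x - h 0| ≤ (|deriv h 0| + K2 * |x|) * |x| := by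
    intro x
    have hs : Convex ℝ (Set.Icc (-|x|) |x|) := convex_Icc _ _
    have hmem0 : (0:ℝ) ∈ Set.Icc (-|x|) |x| := ⟨neg_nonpos.mpr (abs_nonneg x), abs_nonneg x⟩
    have hmemx : x ∈ Set.Icc (-|x|) |x| := ⟨neg_abs_le x, le_abs_self x⟩
    have := Convex.norm_image_sub_le_of_norm_hasDerivWithin_le
      (f := h) (f' := deriv h) (s := Set.Icc (-|x|) |x|) (C := |deriv h 0| + K2 * |x|)
      (fun z _ => hdiff.1.differentiableAt.hasDerivAt.hasDerivWithinAt)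
      (fun z hz => by
        have e1 : |deriv h z - deriv h 0| ≤ K2 * |z - 0| := lip z 0
        have e2 : |z| ≤ |x| := abs_le.mpr ⟨hz.1, hz.2⟩
        have : |deriv h z| ≤ |deriv h 0| + K2 * |z| := by
          have := abs_sub_abs_le_abs_sub (deriv h z) (deriv h 0)
          simp only [sub_zero] at e1; linarith
        have := mul_le_mul_of_nonneg_left e2 hK2nn
        simp only [Real.norm_eq_abs]; linarith)
      hs hmem0 hmemx
    simpa [Real.norm_eq_abs] using this
  intro x
  have key : h x ≤ A + (2*A + K2) * |x| + K2 * x^2 := by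
    have e1 := hbd x
    have e2 : h x - h 0 ≤ |h x - h 0| := le_abs_self _
    have e3 : h 0 ≤ A := le_trans (le_abs_self _) h0
    have e4 : (|deriv h 0| + K2 * |x|) * |x| ≤ (2*A + K2) * |x| + K2 * x^2 := by
      have := mul_le_mul_of_nonneg_right hd0 (abs_nonneg x)
      have hx2 : |x| * |x| = x^2 := by rw [← abs_mul, abs_mul_self, sq]
      nlinarith [abs_nonneg x]
    linarith
  have habs : |x| ≤ 1 + x^2 := by nlinarith [abs_nonneg x, sq_abs x, sq_nonneg (|x| - 1)]
  have h1x : (1:ℝ) ≤ 1 + x^2 := by nlinarith [sq_nonneg x]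
  have hx2 : x^2 ≤ 1 + x^2 := by linarith
  calc h x ≤ A + (2*A + K2) * |x| + K2 * x^2 := key
    _ ≤ A * (1+x^2) + (2*A + K2) * (1+x^2) + K2 * (1+x^2) := by
        have := mul_le_mul_of_nonneg_left habs (by linarith : (0:ℝ) ≤ 2*A + K2)
        have := mul_le_mul_of_nonneg_left hx2 hK2nn
        nlinarith
    _ ≤ (3*A + 2*K2 + 1) * (1 + x^2) := by nlinarith


lemma iteratedDeriv_two_eq (f : ℝ → ℝ) : iteratedDeriv 2 f = deriv (deriv f) := by
  rw [show (2:ℕ) = 1 + 1 from rfl, iteratedDeriv_succ, iteratedDeriv_one]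

lemma contDiff_two_deriv {F1 : ℝ → ℝ} (h1 : ContDiff ℝ 2 F1) :
    Differentiable ℝ F1 ∧ ContDiff ℝ 1 (deriv F1) := by
  have := (contDiff_succ_iff_deriv (n := 1)).mp (by exact_mod_cast h1)
  exact ⟨this.1, this.2.2⟩

lemma deriv2_sub {F1 F2 : ℝ → ℝ} (h1 : ContDiff ℝ 2 F1) (h2 : ContDiff ℝ 2 F2) :
    deriv (deriv (fun y => F1 y - F2 y)) = fun y => deriv (deriv F1) y - deriv (deriv F2) y := by
  obtain ⟨d1, c1⟩ := contDiff_two_deriv h1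
  obtain ⟨d2, c2⟩ := contDiff_two_deriv h2
  have e1 : deriv (fun y => F1 y - F2 y) = fun y => deriv F1 y - deriv F2 y :=
    funext fun y => deriv_fun_sub (d1 y) (d2 y)
  rw [e1]
  exact funext fun y => deriv_fun_sub (c1.differentiable one_ne_zero y) (c2.differentiable one_ne_zero y)


lemma deriv2_const_mul_psiB (a : ℝ) (y : ℝ) :
    deriv (deriv (fun x => a * psiB x)) y = a * psiB y := by
  have e1 : deriv (fun x => a * psiB x) = fun x => a * (Real.exp x - Real.exp (-x)) :=
    funext fun x => ((hasDerivAt_psiB x).const_mul a).deriv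
  rw [e1]
  exact ((hasDerivAt_psiB' y).const_mul a).deriv

set_option maxHeartbeats 2000000 in
/-- One-sided comparison principle: if `f, g` are two classical solutions with the same
terminal value, then `f ≤ g` (hence by symmetry `f = g`). -/
lemma comp_le (S : Standing) (hS : S.Hyp) (f g : ℝ → ℝ → ℝ) (εf εg Kf Kg : ℝ)
    (hεf : εf ∈ Set.Ioc (0:ℝ) S.eps0) (hεg : εg ∈ Set.Ioc (0:ℝ) S.eps0)
    (hf_cont : ContinuousOn (fun p : ℝ × ℝ => f p.1 p.2) (Set.Icc 0 S.T ×ˢ Set.univ))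
    (hg_cont : ContinuousOn (fun p : ℝ × ℝ => g p.1 p.2) (Set.Icc 0 S.T ×ˢ Set.univ))
    (hf_C2 : ∀ t ∈ Set.Ico (0:ℝ) S.T, ContDiff ℝ 2 fun y => f t y)
    (hg_C2 : ∀ t ∈ Set.Ico (0:ℝ) S.T, ContDiff ℝ 2 fun y => g t y)
    (hfxx : ∀ t ∈ Set.Ico (0:ℝ) S.T, ∀ x, |d2x f t x| ≤ Kf)
    (hgxx : ∀ t ∈ Set.Ico (0:ℝ) S.T, ∀ x, |d2x g t x| ≤ Kg)
    (hf_dom : ∀ t ∈ Set.Ico (0:ℝ) S.T, ∀ x, (t, x, d2x f t x) ∈ S.Deps εf)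
    (hg_dom : ∀ t ∈ Set.Ico (0:ℝ) S.T, ∀ x, (t, x, d2x g t x) ∈ S.Deps εg)
    (hf_pde : ∀ t ∈ Set.Ico (0:ℝ) S.T, ∀ x,
        HasDerivWithinAt (fun s => f s x) (-(S.Fbar t x (d2x f t x))) (Set.Ico 0 S.T) t)
    (hg_pde : ∀ t ∈ Set.Ico (0:ℝ) S.T, ∀ x,
        HasDerivWithinAt (fun s => g s x) (-(S.Fbar t x (d2x g t x))) (Set.Ico 0 S.T) t)
    (hT : ∀ x, f S.T x = g S.T x) :
    ∀ t ∈ Set.Icc (0:ℝ) S.T, ∀ x, f t x ≤ g t x := by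
  have hT0 : 0 < S.T := S.T_pos
  have hKf0 : 0 ≤ Kf := le_trans (abs_nonneg _) (hfxx 0 ⟨le_rfl, hT0⟩ 0)
  have hKg0 : 0 ≤ Kg := le_trans (abs_nonneg _) (hgxx 0 ⟨le_rfl, hT0⟩ 0)
  set K : ℝ := max Kf Kg with hK
  have hK0 : 0 ≤ K := le_trans hKf0 (le_max_left _ _)
  set ε : ℝ := min εf (min εg (1/(K+1))) with hε
  have hε0 : 0 < ε := by
    apply lt_min hεf.1
    apply lt_min hεg.1
    positivity
  have hεIoc : ε ∈ Set.Ioc (0:ℝ) S.eps0 := ⟨hε0, le_trans (min_le_left _ _) hεf.2⟩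
  have hKinv : K + 1 ≤ 1/ε := by
    have h1 : ε ≤ 1/(K+1) := le_trans (min_le_right _ _) (min_le_right _ _)
    have := one_div_le_one_div_of_le hε0 h1
    rwa [one_div_one_div] at this
  have hmonof : ∀ p, p ∈ S.Deps εf → p ∈ S.Deps ε := by
    intro p hp
    refine ⟨hp.1, le_trans hp.2 ?_⟩
    exact_mod_cast EReal.coe_le_coe_iff.mpr (one_div_le_one_div_of_le hε0 (min_le_left _ _))
  have hmonog : ∀ p, p ∈ S.Deps εg → p ∈ S.Deps ε := by
    intro p hp
    refine ⟨hp.1, le_trans hp.2 ?_⟩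
    exact_mod_cast EReal.coe_le_coe_iff.mpr
      (one_div_le_one_div_of_le hε0 (le_trans (min_le_right _ _) (min_le_left _ _)))
  obtain ⟨C, hC0, hC⟩ := hS.FbarZ_bdd ε hεIoc
  obtain ⟨γ, hγcont, hγeq⟩ := hS.Deps_eq ε hεIoc
  have hDsub : S.Deps ε ⊆ S.D := by
    intro p hp
    exact ⟨hp.1, lt_of_le_of_lt hp.2 (EReal.coe_lt_top _)⟩
  -- Step A: increment bound for `F̄` in the `z` variable.
  have keyA : ∀ t ∈ Set.Ico (0:ℝ) S.T, ∀ x δ, 0 < δ → d2x f t x ≤ d2x g t x + δ →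
      S.Fbar t x (d2x f t x) - S.Fbar t x (d2x g t x) ≤ C * δ := by
    intro t ht x δ hδ hle
    set z' := d2x f t x with hz'def
    set z := d2x g t x with hzdef
    have htIcc : t ∈ Set.Icc (0:ℝ) S.T := ⟨ht.1, ht.2.le⟩
    have hz'mem : (t, x, z') ∈ S.Deps ε := hmonof _ (hf_dom t ht x)
    have hzmem : (t, x, z) ∈ S.Deps ε := hmonog _ (hg_dom t ht x)
    have hz'γ : z' ≤ γ t x := by
      have := hz'mem; rw [hγeq] at this; exact this.2
    have hzγ : z ≤ γ t x := by
      have := hzmem; rw [hγeq] at this; exact this.2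
    have habsz' : |z'| ≤ K := le_trans (hfxx t ht x) (le_max_left _ _)
    have habsz : |z| ≤ K := le_trans (hgxx t ht x) (le_max_right _ _)
    have hseg : ∀ ζ, ((z' ≤ ζ ∧ ζ ≤ z) ∨ (z ≤ ζ ∧ ζ ≤ z')) →
        (t, x, ζ) ∈ S.Deps ε ∧ (t, x, ζ) ∈ S.DepsK ε (1/ε) := by
      intro ζ hζ
      have h1 : ζ ≤ γ t x := by
        rcases hζ with ⟨_, h⟩ | ⟨_, h⟩
        · exact le_trans h hzγ
        · exact le_trans h hz'γ
      have hd : (t, x, ζ) ∈ S.Deps ε := by rw [hγeq]; exact ⟨htIcc, h1⟩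
      have habs : |ζ| ≤ 1/ε := by
        have h2 := abs_le.mp habsz'
        have h3 := abs_le.mp habsz
        rw [abs_le]
        constructor <;> rcases hζ with ⟨ha, hb⟩ | ⟨ha, hb⟩ <;> linarith
      exact ⟨hd, hd, habs⟩
    rcases lt_trichotomy z' z with hlt | heq | hgt
    · -- z' < z : use MVT and positivity of FbarZ
      obtain ⟨ζ, hζmem, hζeq⟩ := exists_hasDerivAt_eq_slope (fun w => S.Fbar t x w)
        (fun w => S.FbarZ t x w) hlt
        (fun w hw => ((hS.Fbar_dZ (t, x, w)
          (hDsub (hseg w (Or.inl ⟨hw.1, hw.2⟩)).1)).continuousAt).continuousWithinAt)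
        (fun w hw => hS.Fbar_dZ (t, x, w) (hDsub (hseg w (Or.inl ⟨hw.1.le, hw.2.le⟩)).1))
      have hpos : 0 < S.FbarZ t x ζ :=
        hS.FbarZ_pos ε hεIoc (t, x, ζ) (hseg ζ (Or.inl ⟨hζmem.1.le, hζmem.2.le⟩)).1
      have hzz : 0 < z - z' := sub_pos.mpr hlt
      have heq2 : S.Fbar t x z - S.Fbar t x z' = S.FbarZ t x ζ * (z - z') :=
        (div_eq_iff hzz.ne').mp hζeq.symm
      nlinarith
    · rw [heq]; simp; positivity
    · -- z < z' : use MVT and the bound FbarZ ≤ C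
      obtain ⟨ζ, hζmem, hζeq⟩ := exists_hasDerivAt_eq_slope (fun w => S.Fbar t x w)
        (fun w => S.FbarZ t x w) hgt
        (fun w hw => ((hS.Fbar_dZ (t, x, w)
          (hDsub (hseg w (Or.inr ⟨hw.1, hw.2⟩)).1)).continuousAt).continuousWithinAt)
        (fun w hw => hS.Fbar_dZ (t, x, w) (hDsub (hseg w (Or.inr ⟨hw.1.le, hw.2.le⟩)).1))
      have hle' : S.FbarZ t x ζ ≤ C :=
        (hC (t, x, ζ) (hseg ζ (Or.inr ⟨hζmem.1.le, hζmem.2.le⟩)).2).1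
      have hpos : 0 < S.FbarZ t x ζ :=
        hS.FbarZ_pos ε hεIoc (t, x, ζ) (hseg ζ (Or.inr ⟨hζmem.1.le, hζmem.2.le⟩)).1
      have hzz : 0 < z' - z := sub_pos.mpr hgt
      have heq2 : S.Fbar t x z' - S.Fbar t x z = S.FbarZ t x ζ * (z' - z) :=
        (div_eq_iff hzz.ne').mp hζeq.symm
      have hzd : z' - z ≤ δ := by linarith
      nlinarith
  -- Step B: uniform quadratic growth bound for `w = f - g`.
  set K2 : ℝ := Kf + Kg with hK2
  have hK20 : 0 ≤ K2 := by positivity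
  obtain ⟨A₀, hA₀⟩ : ∃ A₀, ∀ p ∈ (Set.Icc (0:ℝ) S.T) ×ˢ (Set.Icc (0:ℝ) 1),
      ‖f p.1 p.2 - g p.1 p.2‖ ≤ A₀ := by
    apply IsCompact.exists_bound_of_continuousOn (isCompact_Icc.prod isCompact_Icc)
    exact (hf_cont.sub hg_cont).mono (Set.prod_mono le_rfl (Set.subset_univ _))
  set A : ℝ := max A₀ 0 with hA
  have hAnn : 0 ≤ A := le_max_right _ _
  set Q : ℝ := 3*A + 2*K2 + 1 with hQ
  have hQ0 : 0 < Q := by positivity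
  have hgrow : ∀ t ∈ Set.Icc (0:ℝ) S.T, ∀ x, f t x - g t x ≤ Q * (1 + x^2) := by
    intro t ht x
    rcases eq_or_lt_of_le ht.2 with hteq | htlt
    · rw [hteq, hT x]
      simp only [sub_self]
      positivity
    · have htIco : t ∈ Set.Ico (0:ℝ) S.T := ⟨ht.1, htlt⟩
      have hhC2 : ContDiff ℝ 2 (fun y => f t y - g t y) := (hf_C2 t htIco).sub (hg_C2 t htIco)
      have hd2 : ∀ y, |deriv (deriv (fun y => f t y - g t y)) y| ≤ K2 := by
        intro y
        rw [deriv2_sub (hf_C2 t htIco) (hg_C2 t htIco)]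
        have e1 : deriv (deriv (fun y => f t y)) y = d2x f t y := by
          rw [d2x, iteratedDeriv_two_eq]
        have e2 : deriv (deriv (fun y => g t y)) y = d2x g t y := by
          rw [d2x, iteratedDeriv_two_eq]
        simp only [e1, e2]
        calc |d2x f t y - d2x g t y| ≤ |d2x f t y| + |d2x g t y| := abs_sub _ _
          _ ≤ Kf + Kg := add_le_add (hfxx t htIco y) (hgxx t htIco y)
      have hb0 : |f t 0 - g t 0| ≤ A := by
        have := hA₀ (t, 0) ⟨ht, ⟨le_rfl, zero_le_one⟩⟩
        simp only [Real.norm_eq_abs] at this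
        exact le_trans this (le_max_left _ _)
      have hb1 : |f t 1 - g t 1| ≤ A := by
        have := hA₀ (t, 1) ⟨ht, ⟨zero_le_one, le_rfl⟩⟩
        simp only [Real.norm_eq_abs] at this
        exact le_trans this (le_max_left _ _)
      exact growth_of_C2 hhC2 hd2 hb0 hb1 hAnn x
  -- the constant `λ` of the barrier
  set lam : ℝ := C + 1 with hlam
  have hlam0 : 0 < lam := by positivity
  -- Step C: the key barrier estimate
  have key : ∀ η, 0 < η → ∀ t ∈ Set.Icc (0:ℝ) S.T, ∀ x,
      f t x - g t x ≤ η * Real.exp (lam * (S.T - t)) * psiB x := by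
    intro η hη
    by_contra hcon
    push_neg at hcon
    obtain ⟨t₁, ht₁, x₁, hx₁⟩ := hcon
    -- threshold beyond which the barrier dominates the quadratic growth
    have hten : Tendsto (fun s : ℝ => Q * (1 + s^2) * Real.exp (-s)) atTop (nhds 0) := by
      have h0 := (Real.tendsto_pow_mul_exp_neg_atTop_nhds_zero 0).const_mul Q
      have h2 := (Real.tendsto_pow_mul_exp_neg_atTop_nhds_zero 2).const_mul Q
      have h3 := h0.add h2
      simp only [mul_zero, add_zero] at h3
      exact h3.congr (fun s => by rw [pow_zero]; ring)
    obtain ⟨R₁, hR₁⟩ := eventually_atTop.mp (hten.eventually_lt_const hη)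
    set R : ℝ := max R₁ |x₁| with hR
    have hRx₁ : |x₁| ≤ R := le_max_right _ _
    have hR0 : 0 ≤ R := le_trans (abs_nonneg x₁) hRx₁
    -- lower bound for the barrier
    have hbar : ∀ t ∈ Set.Icc (0:ℝ) S.T, ∀ x : ℝ,
        Real.exp |x| ≤ Real.exp (lam * (S.T - t)) * psiB x := by
      intro t ht x
      have hTt : 0 ≤ S.T - t := sub_nonneg.mpr ht.2
      have h1 : (1:ℝ) ≤ Real.exp (lam * (S.T - t)) := by
        rw [Real.one_le_exp_iff]
        positivity
      calc Real.exp |x| ≤ psiB x := exp_abs_le_psiB x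
        _ = 1 * psiB x := (one_mul _).symm
        _ ≤ Real.exp (lam * (S.T - t)) * psiB x :=
            mul_le_mul_of_nonneg_right h1 (psiB_pos x).le
    -- outside the box, `w - η·barrier` is negative
    have houtside : ∀ t ∈ Set.Icc (0:ℝ) S.T, ∀ x : ℝ, R < |x| →
        f t x - g t x - η * Real.exp (lam * (S.T - t)) * psiB x < 0 := by
      intro t ht x hx
      have h1 : f t x - g t x ≤ Q * (1 + x^2) := hgrow t ht x
      have h2 : Q * (1 + |x|^2) * Real.exp (-|x|) < η :=
        hR₁ |x| (le_trans (le_max_left _ _) hx.le)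
      have h3 : Q * (1 + x^2) < η * Real.exp |x| := by
        have he : 0 < Real.exp |x| := Real.exp_pos _
        have h4 := mul_lt_mul_of_pos_right h2 he
        rw [mul_assoc, ← Real.exp_add, neg_add_cancel, Real.exp_zero, mul_one, sq_abs] at h4
        exact h4
      have h4 : η * Real.exp |x| ≤ η * (Real.exp (lam * (S.T - t)) * psiB x) :=
        mul_le_mul_of_nonneg_left (hbar t ht x) hη.le
      nlinarith
    -- maximum over a compact box
    set v : ℝ × ℝ → ℝ :=
      fun p => f p.1 p.2 - g p.1 p.2 - η * Real.exp (lam * (S.T - p.1)) * psiB p.2 with hv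
    have hvcont : ContinuousOn v (Set.Icc 0 S.T ×ˢ (Set.univ : Set ℝ)) := by
      apply (hf_cont.sub hg_cont).sub
      have c1 : Continuous fun p : ℝ × ℝ => Real.exp (lam * (S.T - p.1)) :=
        Real.continuous_exp.comp (continuous_const.mul (continuous_const.sub continuous_fst))
      have c2 : Continuous fun p : ℝ × ℝ => psiB p.2 :=
        contDiff_psiB.continuous.comp continuous_snd
      exact ((continuous_const.mul c1).mul c2).continuousOn
    have hcomp : IsCompact ((Set.Icc (0:ℝ) S.T) ×ˢ (Set.Icc (-R) R)) :=
      isCompact_Icc.prod isCompact_Icc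
    have hne : ((Set.Icc (0:ℝ) S.T) ×ˢ (Set.Icc (-R) R)).Nonempty :=
      ⟨(0, 0), ⟨⟨le_rfl, hT0.le⟩, ⟨neg_nonpos.mpr hR0, hR0⟩⟩⟩
    obtain ⟨p₀, hp₀mem, hp₀max⟩ := hcomp.exists_isMaxOn hne
      (hvcont.mono (Set.prod_mono le_rfl (Set.subset_univ _)))
    obtain ⟨t₀, x₀⟩ := p₀
    set m : ℝ := v (t₀, x₀) with hm
    have hmax' : ∀ p ∈ (Set.Icc (0:ℝ) S.T) ×ˢ (Set.Icc (-R) R), v p ≤ m :=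
      fun p hp => isMaxOn_iff.mp hp₀max p hp
    have hmpos : 0 < m := by
      have hin : (t₁, x₁) ∈ (Set.Icc (0:ℝ) S.T) ×ˢ (Set.Icc (-R) R) :=
        ⟨ht₁, ⟨(abs_le.mp hRx₁).1, (abs_le.mp hRx₁).2⟩⟩
      have h5 := hmax' (t₁, x₁) hin
      have hpos : 0 < v (t₁, x₁) := by simp only [hv]; linarith
      linarith
    have hglob : ∀ t ∈ Set.Icc (0:ℝ) S.T, ∀ x : ℝ, v (t, x) ≤ m := by
      intro t ht x
      rcases le_or_gt |x| R with h | h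
      · exact hmax' (t, x) ⟨ht, abs_le.mp h⟩
      · have h6 : v (t, x) < 0 := houtside t ht x h
        linarith
    -- the max is not attained at the terminal time
    have ht₀T : t₀ < S.T := by
      rcases eq_or_lt_of_le hp₀mem.1.2 with he | hl
      · exfalso
        have h1 : v (t₀, x₀) =
            f t₀ x₀ - g t₀ x₀ - η * Real.exp (lam * (S.T - t₀)) * psiB x₀ := by
          simp only [hv]
        have h2 := hT x₀
        rw [← he] at h2
        have h6 : 0 < η * Real.exp (lam * (S.T - t₀)) * psiB x₀ := by
          have h3 := psiB_pos x₀
          have h4 := Real.exp_pos (lam * (S.T - t₀))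
          positivity
        have h5 : m = v (t₀, x₀) := hm
        linarith
      · exact hl
    have ht₀Ico : t₀ ∈ Set.Ico (0:ℝ) S.T := ⟨hp₀mem.1.1, ht₀T⟩
    set a : ℝ := η * Real.exp (lam * (S.T - t₀)) with ha
    have ha0 : 0 < a := by positivity
    -- second derivative test in the space variable
    set φ : ℝ → ℝ := fun x => (f t₀ x - g t₀ x) - a * psiB x with hφ
    have hφeq : ∀ x, φ x = v (t₀, x) := by
      intro x; simp only [hφ, hv, ha]
    have hφC2 : ContDiff ℝ 2 φ :=
      ((hf_C2 t₀ ht₀Ico).sub (hg_C2 t₀ ht₀Ico)).sub (contDiff_const.mul contDiff_psiB)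
    have hφmax : ∀ x, φ x ≤ φ x₀ := by
      intro x
      rw [hφeq x, hφeq x₀]
      exact hglob t₀ ⟨ht₀Ico.1, ht₀T.le⟩ x
    have hd2 := second_deriv_nonpos_of_max hφC2 hφmax
    have hd2eq : deriv (deriv φ) x₀ = (d2x f t₀ x₀ - d2x g t₀ x₀) - a * psiB x₀ := by
      have e1 : deriv (deriv (fun x => (f t₀ x - g t₀ x) - a * psiB x)) =
          fun y => deriv (deriv (fun x => f t₀ x - g t₀ x)) y -
            deriv (deriv (fun x => a * psiB x)) y :=
        deriv2_sub ((hf_C2 t₀ ht₀Ico).sub (hg_C2 t₀ ht₀Ico))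
          (contDiff_const.mul contDiff_psiB)
      have e2 : deriv (deriv (fun x => f t₀ x - g t₀ x)) =
          fun y => deriv (deriv (fun x => f t₀ x)) y - deriv (deriv (fun x => g t₀ x)) y :=
        deriv2_sub (hf_C2 t₀ ht₀Ico) (hg_C2 t₀ ht₀Ico)
      rw [hφ, e1]
      simp only [e2, deriv2_const_mul_psiB]
      rw [d2x, d2x, iteratedDeriv_two_eq, iteratedDeriv_two_eq]
    have hzbound : d2x f t₀ x₀ ≤ d2x g t₀ x₀ + a * psiB x₀ := by
      rw [hd2eq] at hd2; linarith
    have hδ₀0 : 0 < a * psiB x₀ := mul_pos ha0 (psiB_pos x₀)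
    have hFdiff := keyA t₀ ht₀Ico x₀ (a * psiB x₀) hδ₀0 hzbound
    -- time derivative of `s ↦ v (s, x₀)` at `t₀`
    have hder : HasDerivWithinAt (fun s => v (s, x₀))
        (-(S.Fbar t₀ x₀ (d2x f t₀ x₀)) - -(S.Fbar t₀ x₀ (d2x g t₀ x₀)) + lam * (a * psiB x₀))
        (Set.Ico 0 S.T) t₀ := by
      have h1 := (hf_pde t₀ ht₀Ico x₀).fun_sub (hg_pde t₀ ht₀Ico x₀)
      have h2 : HasDerivAt (fun s => η * Real.exp (lam * (S.T - s)) * psiB x₀)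
          (-(lam * (η * Real.exp (lam * (S.T - t₀)) * psiB x₀))) t₀ := by
        have hi : HasDerivAt (fun s : ℝ => lam * (S.T - s)) (-lam) t₀ := by
          have h7 := ((hasDerivAt_const t₀ S.T).sub (hasDerivAt_id t₀)).const_mul lam
          simpa using h7
        have he := hi.exp
        have h8 := (he.const_mul η).mul_const (psiB x₀)
        exact h8.congr_deriv (by ring)
      have h3 := h1.fun_sub h2.hasDerivWithinAt
      have h4 : (fun s => f s x₀ - g s x₀ - η * Real.exp (lam * (S.T - s)) * psiB x₀) =
          fun s => v (s, x₀) := by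
        funext s; simp only [hv]
      rw [h4] at h3
      exact h3.congr_deriv (by simp only [ha]; ring)
    have hdpos : 0 < -(S.Fbar t₀ x₀ (d2x f t₀ x₀)) - -(S.Fbar t₀ x₀ (d2x g t₀ x₀))
        + lam * (a * psiB x₀) := by
      simp only [hlam]
      nlinarith [hFdiff, hδ₀0]
    exact no_max_of_pos_right_deriv ht₀Ico hder hdpos
      (fun s hs => (hglob s hs x₀).trans_eq hm)
  -- conclude
  intro t ht x
  by_contra hcon
  push_neg at hcon
  set P : ℝ := Real.exp (lam * (S.T - t)) * psiB x with hP
  have hP0 : 0 < P := by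
    have := psiB_pos x
    have := Real.exp_pos (lam * (S.T - t))
    positivity
  set w0 : ℝ := f t x - g t x with hw0
  have hw0pos : 0 < w0 := sub_pos.mpr hcon
  have := key (w0 / (2 * P)) (by positivity) t ht x
  rw [← hw0] at this
  have : w0 ≤ w0 / 2 := by
    have heq : w0 / (2 * P) * Real.exp (lam * (S.T - t)) * psiB x = w0 / 2 := by
      field_simp [hP]
      ring
    linarith [this, heq ▸ this]
  linarith

/-- **Proposition 3.6.d** (uniqueness of classical solutions).
Under the standing assumptions and the solution hypotheses, `u` is the unique solution of
`∂ₜu' + F̄(·,∂²ₓu') = 0`, `u'(T,·) = Φ`, in the class of continuous functions on `[0,T] × ℝ`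
that are `C^{1,2}` on `[0,T) × ℝ` with bounded `∂²ₓu'` and `(·,∂²ₓu') ∈ D_{ε''}` for some
`ε'' ∈ (0,ε₀]`. -/
theorem uniqueness_classical (S : Standing) (hS : S.Hyp)
    (KΦ εΦ : ℝ) (Φ : ℝ → ℝ) (K' ε' : ℝ) (u : ℝ → ℝ → ℝ)
    (hsol : Standing.SolHyp S KΦ εΦ Φ K' ε' u)
    (u' : ℝ → ℝ → ℝ)
    (hu'_cont : ContinuousOn (fun p : ℝ × ℝ => u' p.1 p.2) (Set.Icc 0 S.T ×ˢ Set.univ))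
    (hu'_C2x : ∀ t ∈ Set.Ico (0 : ℝ) S.T, ContDiff ℝ 2 fun y => u' t y)
    (hu'_derivs_cont : ∀ n : ℕ, n ≤ 2 → ContinuousOn
        (fun p : ℝ × ℝ => iteratedDeriv n (fun y => u' p.1 y) p.2)
        (Set.Ico 0 S.T ×ˢ Set.univ))
    (hu'xx_bdd : ∃ K : ℝ, ∀ t ∈ Set.Ico (0 : ℝ) S.T, ∀ x, |d2x u' t x| ≤ K)
    (hu'_dom : ∃ ε'' ∈ Set.Ioc (0 : ℝ) S.eps0,
        ∀ t ∈ Set.Ico (0 : ℝ) S.T, ∀ x, (t, x, d2x u' t x) ∈ S.Deps ε'')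
    (hu'_pde : ∀ t ∈ Set.Ico (0 : ℝ) S.T, ∀ x,
        HasDerivWithinAt (fun s => u' s x) (-(S.Fbar t x (d2x u' t x))) (Set.Ico 0 S.T) t)
    (hu'_T : ∀ x, u' S.T x = Φ x) :
    ∀ t ∈ Set.Icc (0 : ℝ) S.T, ∀ x : ℝ, u' t x = u t x := by
  obtain ⟨K'', hK''⟩ := hu'xx_bdd
  obtain ⟨ε'', hε''Ioc, hu'dom⟩ := hu'_dom
  have hu_C2 : ∀ t ∈ Set.Ico (0:ℝ) S.T, ContDiff ℝ 2 fun y => u t y :=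
    fun t ht => (hsol.u_C4x t ht).of_le (by norm_num)
  have huxx : ∀ t ∈ Set.Ico (0:ℝ) S.T, ∀ x, |d2x u t x| ≤ K' :=
    fun t ht x => hsol.uxx_bdd t ⟨ht.1, ht.2.le⟩ x
  have hudom : ∀ t ∈ Set.Ico (0:ℝ) S.T, ∀ x, (t, x, d2x u t x) ∈ S.Deps ε' :=
    fun t ht x => hsol.u_dom t ⟨ht.1, ht.2.le⟩ x
  have hTeq : ∀ x, u' S.T x = u S.T x := fun x => (hu'_T x).trans (hsol.terminal x).symm
  have h1 : ∀ t ∈ Set.Icc (0:ℝ) S.T, ∀ x, u' t x ≤ u t x :=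
    comp_le S hS u' u ε'' ε' K'' K' hε''Ioc hsol.eps'_mem hu'_cont hsol.u_cont
      hu'_C2x hu_C2 hK'' huxx hu'dom hudom hu'_pde hsol.pde hTeq
  have h2 : ∀ t ∈ Set.Icc (0:ℝ) S.T, ∀ x, u t x ≤ u' t x :=
    comp_le S hS u u' ε' ε'' K' K'' hsol.eps'_mem hε''Ioc hsol.u_cont hu'_cont
      hu_C2 hu'_C2x huxx hK'' hudom hu'dom hsol.pde hu'_pde (fun x => (hTeq x).symm)
  exact fun t ht x => le_antisymm (h1 t ht x) (h2 t ht x)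
end
end

section
/- Face-lift characterization (Remark 3.4): Let g:ℝ→ℝ be uniformly continuous, let γ̄:ℝ→ℝ be uniformly continuous, and let Γ̄∈C²(ℝ) satisfy Γ̄''=γ̄ on ℝ. Assume the set H:={h∈C²(ℝ) : h(x)≥g(x) and h''(x)≤γ̄(x) for all x∈ℝ} is nonempty. Then for every x∈ℝ, inf{h(x) : h∈H} = (g−Γ̄)^conc(x) + Γ̄(x), where (g−Γ̄)^conc denotes the concave envelope of g−Γ̄, i.e. the pointwise infimum over all concave functions ℓ:ℝ→ℝ with ℓ≥g−Γ̄ on ℝ. -/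
open Set

noncomputable section

/-- A concave function on `ℝ` admits a supporting line at every point. -/
lemma exists_supporting_line {f : ℝ → ℝ} (hf : ConcaveOn ℝ Set.univ f) (x : ℝ) :
    ∃ m : ℝ, ∀ y : ℝ, f y ≤ f x + m * (y - x) := by
  set S : Set ℝ := {s : ℝ | ∃ y : ℝ, x < y ∧ s = (f y - f x) / (y - x)} with hS
  have hne : S.Nonempty := ⟨(f (x + 1) - f x) / (x + 1 - x), x + 1, by linarith, rfl⟩
  have hub : ∀ z < x, ∀ s ∈ S, s ≤ (f x - f z) / (x - z) := by
    intro z hz s hs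
    obtain ⟨y, hy, rfl⟩ := hs
    exact hf.slope_anti_adjacent (mem_univ z) (mem_univ y) hz hy
  have hbdd : BddAbove S := ⟨(f x - f (x - 1)) / (x - (x - 1)), fun s hs =>
    hub (x - 1) (by linarith) s hs⟩
  refine ⟨sSup S, fun y => ?_⟩
  rcases lt_trichotomy y x with h | h | h
  · have h1 : sSup S ≤ (f x - f y) / (x - y) := csSup_le hne (hub y h)
    have h2 : 0 < x - y := by linarith
    rw [le_div_iff₀ h2] at h1
    nlinarith
  · simp [h]
  · have h1 : (f y - f x) / (y - x) ≤ sSup S := le_csSup hbdd ⟨y, h, rfl⟩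
    have h2 : 0 < y - x := by linarith
    rw [div_le_iff₀ h2] at h1
    nlinarith

lemma iteratedDeriv_two' {f : ℝ → ℝ} : iteratedDeriv 2 f = deriv (deriv f) := by
  rw [show (2 : ℕ) = 1 + 1 from rfl, iteratedDeriv_succ, iteratedDeriv_one]

/-- A `C²` function with nonpositive second derivative is concave. -/
lemma concave_of_iteratedDeriv2_nonpos {f : ℝ → ℝ} (hf : ContDiff ℝ 2 f)
    (h2 : ∀ x : ℝ, iteratedDeriv 2 f x ≤ 0) : ConcaveOn ℝ Set.univ f := by
  have hf1 : Differentiable ℝ f := hf.differentiable (by norm_num)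
  have hfd1 : Differentiable ℝ (deriv f) :=
    (((contDiff_succ_iff_deriv (n := 1)).mp (by exact_mod_cast hf)).2.2).differentiable (by norm_num)
  refine concaveOn_of_deriv2_nonpos' convex_univ hf1.differentiableOn
    hfd1.differentiableOn (fun y _ => ?_)
  have : iteratedDeriv 2 f y = deriv^[2] f y := by rw [iteratedDeriv_eq_iterate]
  rw [← this]
  exact h2 y

/-- Second iterated derivative of a difference of `C²` functions. -/
lemma iteratedDeriv2_sub {f g : ℝ → ℝ} (hf : ContDiff ℝ 2 f) (hg : ContDiff ℝ 2 g) (x : ℝ) :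
    iteratedDeriv 2 (fun y => f y - g y) x = iteratedDeriv 2 f x - iteratedDeriv 2 g x := by
  have hf1 : Differentiable ℝ f := hf.differentiable (by norm_num)
  have hg1 : Differentiable ℝ g := hg.differentiable (by norm_num)
  have hfd : Differentiable ℝ (deriv f) :=
    (((contDiff_succ_iff_deriv (n := 1)).mp (by exact_mod_cast hf)).2.2).differentiable (by norm_num)
  have hgd : Differentiable ℝ (deriv g) :=
    (((contDiff_succ_iff_deriv (n := 1)).mp (by exact_mod_cast hg)).2.2).differentiable (by norm_num)
  have h1 : deriv (fun y => f y - g y) = fun y => deriv f y - deriv g y := by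
    funext y
    exact deriv_sub (hf1 y) (hg1 y)
  rw [iteratedDeriv_two', iteratedDeriv_two', iteratedDeriv_two', h1]
  exact deriv_sub (hfd x) (hgd x)

/-- **Remark 3.4** (face-lift characterization).
Let `g, γ̄ : ℝ → ℝ` be uniformly continuous and let `Γ̄ ∈ C²(ℝ)` with `Γ̄'' = γ̄`. If the
set `H = {h ∈ C²(ℝ) : h ≥ g, h'' ≤ γ̄}` is nonempty, then for every `x`,
`inf{h(x) : h ∈ H} = (g − Γ̄)^conc(x) + Γ̄(x)`, where `(g − Γ̄)^conc` is the concave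
envelope, i.e. the pointwise infimum of all concave majorants of `g − Γ̄`. -/
theorem face_lift_characterization
    (g γ Γ : ℝ → ℝ)
    (hg : UniformContinuous g) (hγ : UniformContinuous γ)
    (hΓ : ContDiff ℝ 2 Γ) (hΓ'' : ∀ x : ℝ, iteratedDeriv 2 Γ x = γ x)
    (hne : ∃ h : ℝ → ℝ, ContDiff ℝ 2 h ∧ (∀ x : ℝ, g x ≤ h x) ∧
      ∀ x : ℝ, iteratedDeriv 2 h x ≤ γ x) :
    ∀ x : ℝ,
      sInf {v : ℝ | ∃ h : ℝ → ℝ, ContDiff ℝ 2 h ∧ (∀ y : ℝ, g y ≤ h y) ∧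
          (∀ y : ℝ, iteratedDeriv 2 h y ≤ γ y) ∧ v = h x}
        =
      sInf {v : ℝ | ∃ ℓ : ℝ → ℝ, ConcaveOn ℝ Set.univ ℓ ∧
          (∀ y : ℝ, g y - Γ y ≤ ℓ y) ∧ v = ℓ x}
        + Γ x := by
  intro x
  set L : Set ℝ := {v : ℝ | ∃ h : ℝ → ℝ, ContDiff ℝ 2 h ∧ (∀ y : ℝ, g y ≤ h y) ∧
      (∀ y : ℝ, iteratedDeriv 2 h y ≤ γ y) ∧ v = h x} with hL
  set R : Set ℝ := {v : ℝ | ∃ ℓ : ℝ → ℝ, ConcaveOn ℝ Set.univ ℓ ∧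
      (∀ y : ℝ, g y - Γ y ≤ ℓ y) ∧ v = ℓ x} with hR
  -- every h in H gives a concave majorant h - Γ of g - Γ
  have key : ∀ h : ℝ → ℝ, ContDiff ℝ 2 h → (∀ y : ℝ, g y ≤ h y) →
      (∀ y : ℝ, iteratedDeriv 2 h y ≤ γ y) → (h x - Γ x) ∈ R := by
    intro h hC2 hmaj hgam
    refine ⟨fun y => h y - Γ y, ?_, fun y => by dsimp only; linarith [hmaj y], rfl⟩
    refine concave_of_iteratedDeriv2_nonpos (hC2.sub hΓ) (fun y => ?_)
    rw [iteratedDeriv2_sub hC2 hΓ, hΓ'']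
    linarith [hgam y]
  obtain ⟨h₀, h₀C2, h₀maj, h₀gam⟩ := hne
  have hLne : L.Nonempty := ⟨h₀ x, h₀, h₀C2, h₀maj, h₀gam, rfl⟩
  have hRne : R.Nonempty := ⟨h₀ x - Γ x, key h₀ h₀C2 h₀maj h₀gam⟩
  have hLbdd : BddBelow L := ⟨g x, fun v hv => by
    obtain ⟨h, _, hmaj, _, rfl⟩ := hv; exact hmaj x⟩
  have hRbdd : BddBelow R := ⟨g x - Γ x, fun v hv => by
    obtain ⟨ℓ, _, hmaj, rfl⟩ := hv; exact hmaj x⟩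
  apply le_antisymm
  · -- sInf L ≤ sInf R + Γ x
    rw [← sub_le_iff_le_add]
    refine le_csInf hRne (fun v hv => ?_)
    obtain ⟨ℓ, hconc, hmaj, rfl⟩ := hv
    obtain ⟨m, hm⟩ := exists_supporting_line hconc x
    -- affine supporting function a y := ℓ x + m * (y - x); take h := a + Γ
    have hmem : (ℓ x + Γ x) ∈ L := by
      refine ⟨fun y => ℓ x + m * (y - x) + Γ y, ?_, ?_, ?_, by simp⟩
      · exact (contDiff_const.add ((contDiff_const.mul
          (contDiff_id.sub contDiff_const)))).add hΓ
      · intro y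
        dsimp only
        have := hm y
        have := hmaj y
        linarith
      · intro y
        have haff : ContDiff ℝ 2 (fun y : ℝ => ℓ x + m * (y - x)) :=
          contDiff_const.add (contDiff_const.mul (contDiff_id.sub contDiff_const))
        have h1 : iteratedDeriv 2 (fun y : ℝ => ℓ x + m * (y - x) + Γ y) y
            = iteratedDeriv 2 (fun y : ℝ => ℓ x + m * (y - x)) y + iteratedDeriv 2 Γ y := by
          have := iteratedDeriv2_sub (f := fun y : ℝ => ℓ x + m * (y - x) + Γ y)
            (g := Γ) (haff.add hΓ) hΓ y
          simp only [add_sub_cancel_right] at this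
          linarith
        have h2 : iteratedDeriv 2 (fun y : ℝ => ℓ x + m * (y - x)) y = 0 := by
          have e : (fun y : ℝ => ℓ x + m * (y - x)) = fun y : ℝ => m * y + (ℓ x - m * x) := by
            funext y; ring
          rw [e, iteratedDeriv_two']
          have hd : deriv (fun y : ℝ => m * y + (ℓ x - m * x)) = fun _ : ℝ => m := by
            funext z
            have := (((hasDerivAt_id z).const_mul m).add_const (ℓ x - m * x)).deriv
            simpa using this
          rw [hd]
          simp
        rw [h1, h2, hΓ'']
        linarith
    have := csInf_le hLbdd hmem
    linarith
  · -- sInf R + Γ x ≤ sInf L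
    refine le_csInf hLne (fun v hv => ?_)
    obtain ⟨h, hC2, hmaj, hgam, rfl⟩ := hv
    have := csInf_le hRbdd (key h hC2 hmaj hgam)
    linarith
end
end

section
/- Comparison estimate for classical solutions (used in the proof of Theorem 3.1): Under the standing assumptions, let Φ₁,Φ₂:ℝ→ℝ be continuous with sup_{x∈ℝ}|Φ₁(x)−Φ₂(x)|<∞. For i=1,2 let u_i:[0,T]×ℝ→ℝ be continuous with linear growth (|u_i(t,x)|≤C(1+|x|)), such that ∂ₜu_i, ∂ₓu_i, ∂²ₓu_i exist and are continuous on [0,T)×ℝ with ∂²ₓu_i bounded, u_i(T,·)=Φ_i, ∂ₜu_i(t,x)+F̄(t,x,∂²ₓu_i(t,x))=0 for all (t,x)∈[0,T)×ℝ, and (t,x,∂²ₓu_i(t,x))∈D_{ε_i} for all (t,x)∈[0,T)×ℝ and some ε_i∈(0,ε₀]. Then sup_{(t,x)∈[0,T]×ℝ}|u₁(t,x)−u₂(t,x)| ≤ sup_{x∈ℝ}|Φ₁(x)−Φ₂(x)|. -/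
open Set Filter

noncomputable section

namespace Standing

/-- A classical solution of `∂ₜu + F̄(·,∂²ₓu) = 0` on `[0,T) × ℝ` with terminal condition
`Φ`: continuous with linear growth on `[0,T] × ℝ`, `C^{1,2}` on `[0,T) × ℝ` with bounded
`∂²ₓu`, and `(·,∂²ₓu) ∈ D_{ε_i}` for some `ε_i ∈ (0,ε₀]`. -/
structure ClassicalSol (S : Standing) (Φ : ℝ → ℝ) (u : ℝ → ℝ → ℝ) : Prop where
  cont : ContinuousOn (fun p : ℝ × ℝ => u p.1 p.2) (Set.Icc 0 S.T ×ˢ Set.univ)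
  growth : ∃ C : ℝ, ∀ t ∈ Set.Icc (0 : ℝ) S.T, ∀ x : ℝ, |u t x| ≤ C * (1 + |x|)
  C2x : ∀ t ∈ Set.Ico (0 : ℝ) S.T, ContDiff ℝ 2 fun y => u t y
  derivs_cont : ∀ n : ℕ, n ≤ 2 → ContinuousOn
      (fun p : ℝ × ℝ => iteratedDeriv n (fun y => u p.1 y) p.2)
      (Set.Ico 0 S.T ×ˢ Set.univ)
  xx_bdd : ∃ K : ℝ, ∀ t ∈ Set.Ico (0 : ℝ) S.T, ∀ x : ℝ, |d2x u t x| ≤ K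
  dom : ∃ εi ∈ Set.Ioc (0 : ℝ) S.eps0,
      ∀ t ∈ Set.Ico (0 : ℝ) S.T, ∀ x : ℝ, (t, x, d2x u t x) ∈ S.Deps εi
  pde : ∀ t ∈ Set.Ico (0 : ℝ) S.T, ∀ x : ℝ,
      HasDerivWithinAt (fun s => u s x) (-(S.Fbar t x (d2x u t x))) (Set.Ico 0 S.T) t
  terminal : ∀ x : ℝ, u S.T x = Φ x

end Standing



open Topology in
lemma aux_deriv_nonpos_of_max_Ico {f : ℝ → ℝ} {a b t d : ℝ} (ht : t ∈ Set.Ico a b)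
    (hmax : ∀ s ∈ Set.Ico a b, f s ≤ f t)
    (hf : HasDerivWithinAt f d (Set.Ico a b) t) : d ≤ 0 := by
  have hy : (0:ℝ) < (b - t) / 2 := by have := ht.2; linarith
  have hseg : segment ℝ t (t + (b - t)/2) ⊆ Set.Ico a b := by
    rw [segment_eq_Icc (by linarith)]
    intro x hx
    exact ⟨le_trans ht.1 hx.1, lt_of_le_of_lt hx.2 (by linarith [ht.2])⟩
  have htan : ((b - t)/2) ∈ posTangentConeAt (Set.Ico a b) t := by
    have := mem_posTangentConeAt_of_segment_subset (x := t) (y := (b-t)/2) (s := Set.Ico a b)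
    exact this hseg
  have hloc : IsLocalMaxOn f (Set.Ico a b) t :=
    (isMaxOn_iff.mpr hmax).filter_mono inf_le_right
  have := hloc.hasFDerivWithinAt_nonpos hf.hasFDerivWithinAt htan
  simp only [ContinuousLinearMap.smulRight_apply, ContinuousLinearMap.one_apply,
    ContinuousLinearMap.toSpanSingleton_apply, smul_eq_mul] at this
  nlinarith

open Topology in
lemma aux_second_deriv_nonpos_of_max {f f' : ℝ → ℝ} {a d : ℝ}
    (hmax : ∀ x, f x ≤ f a)
    (hf : ∀ x, HasDerivAt f (f' x) x)
    (hf' : HasDerivAt f' d a) : d ≤ 0 := by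
  by_contra hd
  push_neg at hd
  have hfa : f' a = 0 :=
    IsLocalMax.hasDerivAt_eq_zero (Filter.Eventually.of_forall hmax) (hf a)
  have hslope : Tendsto (slope f' a) (𝓝[>] a) (𝓝 d) :=
    (hasDerivAt_iff_tendsto_slope.mp hf').mono_left
      (nhdsWithin_mono a (by intro x hx; exact ne_of_gt hx))
  have hev : ∀ᶠ x in 𝓝[>] a, 0 < slope f' a x :=
    hslope.eventually (eventually_gt_nhds hd)
  have hev2 : ∀ᶠ x in 𝓝[>] a, 0 < f' x := by
    filter_upwards [hev, self_mem_nhdsWithin] with x hx hx'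
    have hxa : 0 < x - a := sub_pos.mpr hx'
    have : slope f' a x = f' x / (x - a) := by
      simp [slope_def_field, hfa]
    rw [this] at hx
    exact (div_pos_iff.mp hx).resolve_right (fun h => absurd hxa (not_lt.mpr h.2.le)) |>.1
  obtain ⟨u, hu, hsub⟩ := mem_nhdsGT_iff_exists_Ioo_subset.mp hev2
  have hau : a < u := hu
  set u' := (a + u) / 2 with hu'
  have hau' : a < u' := by rw [hu']; linarith
  have hmono : StrictMonoOn f (Set.Icc a u') := by
    apply strictMonoOn_of_deriv_pos (convex_Icc a u')
    · exact fun x _ => (hf x).continuousAt.continuousWithinAt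
    · intro x hx
      rw [interior_Icc] at hx
      rw [(hf x).deriv]
      exact hsub ⟨hx.1, by rw [hu'] at hx; linarith [hx.2]⟩
  have := hmono (Set.left_mem_Icc.mpr hau'.le) (Set.right_mem_Icc.mpr hau'.le) hau'
  exact absurd (hmax u') (not_le.mpr this)

lemma aux_mvt_bound {g g' : ℝ → ℝ} {z₁ z₂ C : ℝ} (hC : 0 ≤ C)
    (hdiff : ∀ w ∈ Set.Icc (min z₁ z₂) (max z₁ z₂), HasDerivAt g (g' w) w)
    (hpos : ∀ w ∈ Set.Ioo (min z₁ z₂) (max z₁ z₂), 0 < g' w)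
    (hbd : ∀ w ∈ Set.Ioo (min z₁ z₂) (max z₁ z₂), g' w ≤ C) :
    g z₁ - g z₂ ≤ C * max (z₁ - z₂) 0 := by
  rcases lt_trichotomy z₁ z₂ with h | h | h
  · rw [min_eq_left h.le, max_eq_right h.le] at hdiff hpos
    obtain ⟨c, hc, hceq⟩ := exists_hasDerivAt_eq_slope g g' h
      (fun w hw => (hdiff w hw).continuousAt.continuousWithinAt)
      (fun w hw => hdiff w (Set.mem_Icc_of_Ioo hw))
    have he : g z₂ - g z₁ = g' c * (z₂ - z₁) := by
      rw [hceq, div_mul_cancel₀ _ (by linarith : z₂ - z₁ ≠ 0)]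
    rw [max_eq_right (by linarith : z₁ - z₂ ≤ 0), mul_zero]
    nlinarith [hpos c hc]
  · subst h; simp
  · rw [min_eq_right h.le, max_eq_left h.le] at hdiff hpos hbd
    obtain ⟨c, hc, hceq⟩ := exists_hasDerivAt_eq_slope g g' h
      (fun w hw => (hdiff w hw).continuousAt.continuousWithinAt)
      (fun w hw => hdiff w (Set.mem_Icc_of_Ioo hw))
    have he : g z₁ - g z₂ = g' c * (z₁ - z₂) := by
      rw [hceq, div_mul_cancel₀ _ (by linarith : z₁ - z₂ ≠ 0)]
    rw [max_eq_left (by linarith : 0 ≤ z₁ - z₂), he]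
    exact mul_le_mul_of_nonneg_right (hbd c hc) (by linarith)

set_option maxHeartbeats 1000000 in
lemma one_sided_comparison (S : Standing) (hS : S.Hyp) (Φ₁ Φ₂ : ℝ → ℝ)
    (u₁ u₂ : ℝ → ℝ → ℝ)
    (h₁ : Standing.ClassicalSol S Φ₁ u₁) (h₂ : Standing.ClassicalSol S Φ₂ u₂)
    (B : ℝ) (hB : ∀ x : ℝ, Φ₁ x - Φ₂ x ≤ B) :
    ∀ t ∈ Set.Icc (0 : ℝ) S.T, ∀ x : ℝ, u₁ t x - u₂ t x ≤ B := by
  obtain ⟨C₁, hg₁⟩ := h₁.growth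
  obtain ⟨C₂, hg₂⟩ := h₂.growth
  obtain ⟨K₁, hK₁⟩ := h₁.xx_bdd
  obtain ⟨K₂, hK₂⟩ := h₂.xx_bdd
  obtain ⟨ε₁, hε₁, hdom₁⟩ := h₁.dom
  obtain ⟨ε₂, hε₂, hdom₂⟩ := h₂.dom
  set K : ℝ := max (max K₁ K₂) 1 with hKdef
  have hK1 : (1:ℝ) ≤ K := le_max_right _ _
  have hKpos : (0:ℝ) < K := lt_of_lt_of_le one_pos hK1
  set ε : ℝ := min (min ε₁ ε₂) (1/K) with hεdef
  have hεpos : 0 < ε := lt_min (lt_min hε₁.1 hε₂.1) (by positivity)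
  have hεmem : ε ∈ Set.Ioc (0:ℝ) S.eps0 :=
    ⟨hεpos, le_trans (le_trans (min_le_left _ _) (min_le_left _ _)) hε₁.2⟩
  obtain ⟨C, hCpos, hC⟩ := hS.FbarZ_bdd ε hεmem
  obtain ⟨γ, hγc, hγeq⟩ := hS.Deps_eq ε hεmem
  have hKinv : K ≤ 1/ε := by
    have h1 : 1/(1/K) ≤ 1/ε := one_div_le_one_div_of_le hεpos (min_le_right _ _)
    rwa [one_div_one_div] at h1
  have hmono : ∀ ε' : ℝ, ε ≤ ε' → S.Deps ε' ⊆ S.Deps ε := by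
    intro ε' hle p hp
    refine ⟨hp.1, le_trans hp.2 ?_⟩
    exact EReal.coe_le_coe_iff.mpr (one_div_le_one_div_of_le hεpos hle)
  have hsub₁ : ∀ t ∈ Set.Ico (0:ℝ) S.T, ∀ x, (t, x, d2x u₁ t x) ∈ S.Deps ε :=
    fun t ht x => hmono ε₁ (le_trans (min_le_left _ _) (min_le_left _ _)) (hdom₁ t ht x)
  have hsub₂ : ∀ t ∈ Set.Ico (0:ℝ) S.T, ∀ x, (t, x, d2x u₂ t x) ∈ S.Deps ε :=
    fun t ht x => hmono ε₂ (le_trans (min_le_left _ _) (min_le_right _ _)) (hdom₂ t ht x)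
  have hDsub : S.Deps ε ⊆ S.D := fun p hp => ⟨hp.1, lt_of_le_of_lt hp.2 (EReal.coe_lt_top _)⟩
  set lam : ℝ := 2*C + 1 with hlamdef
  have hlampos : 0 < lam := by positivity
  -- key claim
  have key : ∀ η : ℝ, 0 < η → ∀ t ∈ Set.Icc (0:ℝ) S.T, ∀ x : ℝ,
      u₁ t x - u₂ t x - B - η * Real.exp (lam * (S.T - t)) * (1 + x^2) ≤ 0 := by
    intro η hη
    by_contra hcon
    push_neg at hcon
    obtain ⟨t₁, ht₁, x₁, hψ₁⟩ := hcon
    set ψ : ℝ × ℝ → ℝ := fun p =>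
      u₁ p.1 p.2 - u₂ p.1 p.2 - B - η * Real.exp (lam * (S.T - p.1)) * (1 + p.2^2) with hψdef
    have hψ₁' : 0 < ψ (t₁, x₁) := by simpa [hψdef] using hψ₁
    have hexp1 : ∀ t ∈ Set.Icc (0:ℝ) S.T, (1:ℝ) ≤ Real.exp (lam * (S.T - t)) := by
      intro t ht
      exact Real.one_le_exp (by nlinarith [ht.2])
    set C₀ : ℝ := |C₁| + |C₂| + |B| + 1 with hC₀def
    have hC₀pos : 0 < C₀ := by positivity
    set R : ℝ := max (2*C₀/η) 1 with hRdef
    have hR1 : (1:ℝ) ≤ R := le_max_right _ _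
    have hout : ∀ t ∈ Set.Icc (0:ℝ) S.T, ∀ x : ℝ, R ≤ |x| → ψ (t, x) ≤ 0 := by
      intro t ht x hx
      have hu1 := hg₁ t ht x
      have hu2 := hg₂ t ht x
      have hx1 : (1:ℝ) ≤ |x| := le_trans hR1 hx
      have hx2 : 2*C₀/η ≤ |x| := le_trans (le_max_left _ _) hx
      have h2C₀ : 2*C₀ ≤ η * |x| := by
        rw [div_le_iff₀ hη] at hx2; linarith
      have hE1 := hexp1 t ht
      have habs1 : u₁ t x ≤ C₁ * (1+|x|) := le_trans (le_abs_self _) hu1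
      have habs2 : -(C₂ * (1+|x|)) ≤ u₂ t x := neg_le_of_abs_le hu2
      have p1 : C₁ * (1+|x|) ≤ |C₁| * (1+|x|) :=
        mul_le_mul_of_nonneg_right (le_abs_self C₁) (by positivity)
      have p2 : C₂ * (1+|x|) ≤ |C₂| * (1+|x|) :=
        mul_le_mul_of_nonneg_right (le_abs_self C₂) (by positivity)
      have q2 : 2*C₀*|x| ≤ (η*|x|)*|x| :=
        mul_le_mul_of_nonneg_right h2C₀ (abs_nonneg x)
      have q3 : |x| * |x| = x * x := abs_mul_abs_self x
      have hexpterm : η * (1 + x^2) ≤ η * Real.exp (lam * (S.T - t)) * (1 + x^2) := by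
        simpa using mul_le_mul_of_nonneg_right (mul_le_mul_of_nonneg_left hE1 hη.le)
          (by positivity : (0:ℝ) ≤ 1 + x^2)
      have hBB : -B ≤ |B| := neg_le_abs B
      have q4 : η * (1 + x^2) = η + η * (x * x) := by ring
      have q5 : η * |x| * |x| = η * (x * x) := by rw [mul_assoc, q3]
      have r1 : C₀ * 1 ≤ C₀ * |x| := mul_le_mul_of_nonneg_left hx1 hC₀pos.le
      have r2 : (0:ℝ) ≤ (|B| + 1) * |x| := by positivity
      have r3 : C₀ * (1 + |x|) =
          |C₁| * (1+|x|) + |C₂| * (1+|x|) + (|B| + 1) + (|B|+1) * |x| := by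
        rw [hC₀def]; ring
      show ψ (t, x) ≤ 0
      simp only [hψdef]
      linarith [habs1, p1, habs2, p2, hBB, hexpterm, q2, q4, q5, r1, r2, r3, hη.le]
    have hTnn : (0:ℝ) ≤ S.T := S.T_pos.le
    have hQcomp : IsCompact (Set.Icc (0:ℝ) S.T ×ˢ Set.Icc (-R) R) :=
      isCompact_Icc.prod isCompact_Icc
    have hQne : (Set.Icc (0:ℝ) S.T ×ˢ Set.Icc (-R) R).Nonempty :=
      by
        refine ⟨(S.T, 0), Set.mem_prod.mpr ⟨Set.mem_Icc.mpr ⟨hTnn, le_refl _⟩,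
          Set.mem_Icc.mpr ⟨show -R ≤ (0:ℝ) by linarith [hR1],
          show (0:ℝ) ≤ R by linarith [hR1]⟩⟩⟩
    have hψcont : ContinuousOn ψ (Set.Icc (0:ℝ) S.T ×ˢ Set.Icc (-R) R) := by
      have hs : Set.Icc (0:ℝ) S.T ×ˢ Set.Icc (-R) R ⊆ Set.Icc 0 S.T ×ˢ (Set.univ : Set ℝ) :=
        fun p hp => ⟨hp.1, Set.mem_univ _⟩
      simp only [hψdef]
      refine ContinuousOn.sub (ContinuousOn.sub (ContinuousOn.sub
        (h₁.cont.mono hs) (h₂.cont.mono hs)) continuousOn_const) ?_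
      exact (by fun_prop : Continuous fun p : ℝ × ℝ =>
        η * Real.exp (lam * (S.T - p.1)) * (1 + p.2^2)).continuousOn
    obtain ⟨p₀, hp₀Q, hp₀max⟩ := hQcomp.exists_isMaxOn hQne hψcont
    obtain ⟨t₀, x₀⟩ := p₀
    have ht₀Icc : t₀ ∈ Set.Icc (0:ℝ) S.T := hp₀Q.1
    have hx₁R : |x₁| < R := by
      by_contra hcon2
      push_neg at hcon2
      exact absurd (hout t₁ ht₁ x₁ hcon2) (not_le.mpr hψ₁')
    have hmax1 : ψ (t₁, x₁) ≤ ψ (t₀, x₀) :=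
      isMaxOn_iff.mp hp₀max (t₁, x₁) ⟨ht₁, abs_le.mp hx₁R.le⟩
    have hψ₀pos : 0 < ψ (t₀, x₀) := lt_of_lt_of_le hψ₁' hmax1
    have hglob : ∀ t ∈ Set.Icc (0:ℝ) S.T, ∀ x : ℝ, ψ (t, x) ≤ ψ (t₀, x₀) := by
      intro t ht x
      by_cases hx : |x| ≤ R
      · exact isMaxOn_iff.mp hp₀max (t, x) ⟨ht, abs_le.mp hx⟩
      · exact le_trans (hout t ht x (not_le.mp hx).le) hψ₀pos.le
    have ht₀T : t₀ < S.T := by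
      rcases eq_or_lt_of_le ht₀Icc.2 with heq | hlt
      · exfalso
        have h0 : ψ (t₀, x₀) = Φ₁ x₀ - Φ₂ x₀ - B - η * (1 + x₀^2) := by
          simp only [hψdef, heq, h₁.terminal, h₂.terminal, sub_self, mul_zero, Real.exp_zero]
          ring
        have hBx := hB x₀
        rw [h0] at hψ₀pos
        nlinarith [sq_nonneg x₀]
      · exact hlt
    have ht₀ : t₀ ∈ Set.Ico (0:ℝ) S.T := ⟨ht₀Icc.1, ht₀T⟩
    -- time derivative at the max
    have hdt_exp : HasDerivAt (fun s : ℝ => Real.exp (lam * (S.T - s)))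
        (Real.exp (lam * (S.T - t₀)) * (lam * -1)) t₀ := by
      have h1 : HasDerivAt (fun s : ℝ => S.T - s) (-1) t₀ := (hasDerivAt_id t₀).const_sub S.T
      exact (h1.const_mul lam).exp
    have hdt_bar : HasDerivAt (fun s : ℝ => η * Real.exp (lam * (S.T - s)) * (1 + x₀^2))
        (η * (Real.exp (lam * (S.T - t₀)) * (lam * -1)) * (1 + x₀^2)) t₀ :=
      (hdt_exp.const_mul η).mul_const _
    have hψt : HasDerivWithinAt (fun s => ψ (s, x₀))
        ((-(S.Fbar t₀ x₀ (d2x u₁ t₀ x₀)) - -(S.Fbar t₀ x₀ (d2x u₂ t₀ x₀))) -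
          η * (Real.exp (lam * (S.T - t₀)) * (lam * -1)) * (1 + x₀^2))
        (Set.Ico 0 S.T) t₀ := by
      have h12 := (((h₁.pde t₀ ht₀ x₀).sub (h₂.pde t₀ ht₀ x₀)).sub_const B).sub
        hdt_bar.hasDerivWithinAt
      exact h12
    have hdtle := aux_deriv_nonpos_of_max_Ico ht₀
      (fun s hs => hglob s (Set.Ico_subset_Icc_self hs) x₀) hψt
    have htime : η * lam * Real.exp (lam * (S.T - t₀)) * (1 + x₀^2) ≤
        S.Fbar t₀ x₀ (d2x u₁ t₀ x₀) - S.Fbar t₀ x₀ (d2x u₂ t₀ x₀) := by nlinarith [hdtle]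
    -- space second derivative at the max
    have hC2₁ : ContDiff ℝ 2 (fun y => u₁ t₀ y) := h₁.C2x t₀ ht₀
    have hC2₂ : ContDiff ℝ 2 (fun y => u₂ t₀ y) := h₂.C2x t₀ ht₀
    have hd₁ : Differentiable ℝ (fun y => u₁ t₀ y) := hC2₁.differentiable (by norm_num)
    have hd₂ : Differentiable ℝ (fun y => u₂ t₀ y) := hC2₂.differentiable (by norm_num)
    have hdd₁ : Differentiable ℝ (deriv (fun y => u₁ t₀ y)) := by
      have h2 : ContDiff ℝ ((1:WithTop ℕ∞) + 1) (fun y => u₁ t₀ y) := by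
        norm_num
        exact hC2₁
      exact ((contDiff_succ_iff_deriv.mp h2).2.2).differentiable one_ne_zero
    have hdd₂ : Differentiable ℝ (deriv (fun y => u₂ t₀ y)) := by
      have h2 : ContDiff ℝ ((1:WithTop ℕ∞) + 1) (fun y => u₂ t₀ y) := by
        norm_num
        exact hC2₂
      exact ((contDiff_succ_iff_deriv.mp h2).2.2).differentiable one_ne_zero
    have hit : ∀ v : ℝ → ℝ → ℝ, d2x v t₀ x₀ = deriv (deriv (fun y => v t₀ y)) x₀ := by
      intro v
      rw [d2x, show (2:ℕ) = 1+1 from rfl, iteratedDeriv_succ, iteratedDeriv_one]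
    have hsd₁ : HasDerivAt (deriv (fun y => u₁ t₀ y)) (d2x u₁ t₀ x₀) x₀ := by
      rw [hit u₁]; exact (hdd₁ x₀).hasDerivAt
    have hsd₂ : HasDerivAt (deriv (fun y => u₂ t₀ y)) (d2x u₂ t₀ x₀) x₀ := by
      rw [hit u₂]; exact (hdd₂ x₀).hasDerivAt
    have hpoly : ∀ y : ℝ, HasDerivAt
        (fun y : ℝ => η * Real.exp (lam * (S.T - t₀)) * (1 + y^2))
        (η * Real.exp (lam * (S.T - t₀)) * (2*y)) y := by
      intro y
      have h1 : HasDerivAt (fun y : ℝ => 1 + y^2) (2*y) y := by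
        simpa using (hasDerivAt_pow 2 y).const_add 1
      exact h1.const_mul _
    have hfspace : ∀ y : ℝ, HasDerivAt (fun y => ψ (t₀, y))
        (deriv (fun y => u₁ t₀ y) y - deriv (fun y => u₂ t₀ y) y -
          η * Real.exp (lam * (S.T - t₀)) * (2*y)) y := by
      intro y
      have h3 := (((hd₁ y).hasDerivAt.sub (hd₂ y).hasDerivAt).sub_const B).sub (hpoly y)
      exact h3
    have hlin : HasDerivAt
        (fun y : ℝ => deriv (fun y => u₁ t₀ y) y - deriv (fun y => u₂ t₀ y) y -
          η * Real.exp (lam * (S.T - t₀)) * (2*y))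
        (d2x u₁ t₀ x₀ - d2x u₂ t₀ x₀ - η * Real.exp (lam * (S.T - t₀)) * 2) x₀ := by
      have h4 : HasDerivAt (fun y : ℝ => η * Real.exp (lam * (S.T - t₀)) * (2*y))
          (η * Real.exp (lam * (S.T - t₀)) * 2) x₀ := by
        simpa using ((hasDerivAt_id x₀).const_mul (2:ℝ)).const_mul
          (η * Real.exp (lam * (S.T - t₀)))
      exact (hsd₁.sub hsd₂).sub h4
    have hspace := aux_second_deriv_nonpos_of_max
      (fun y => hglob t₀ (Set.Ico_subset_Icc_self ht₀) y) hfspace hlin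
    -- the MVT bound in z
    have hmem₁ : (t₀, x₀, d2x u₁ t₀ x₀) ∈ S.Deps ε := hsub₁ t₀ ht₀ x₀
    have hmem₂ : (t₀, x₀, d2x u₂ t₀ x₀) ∈ S.Deps ε := hsub₂ t₀ ht₀ x₀
    have hz₁γ : d2x u₁ t₀ x₀ ≤ γ t₀ x₀ := by
      have h5 := hmem₁; rw [hγeq] at h5; exact h5.2
    have hz₂γ : d2x u₂ t₀ x₀ ≤ γ t₀ x₀ := by
      have h5 := hmem₂; rw [hγeq] at h5; exact h5.2
    have hseg : ∀ w ∈ Set.Icc (min (d2x u₁ t₀ x₀) (d2x u₂ t₀ x₀))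
        (max (d2x u₁ t₀ x₀) (d2x u₂ t₀ x₀)), (t₀, x₀, w) ∈ S.Deps ε := by
      intro w hw
      rw [hγeq]
      exact ⟨ht₀Icc, le_trans hw.2 (max_le hz₁γ hz₂γ)⟩
    have habsw : ∀ w ∈ Set.Icc (min (d2x u₁ t₀ x₀) (d2x u₂ t₀ x₀))
        (max (d2x u₁ t₀ x₀) (d2x u₂ t₀ x₀)), |w| ≤ 1/ε := by
      intro w hw
      have hb1 := abs_le.mp (hK₁ t₀ ht₀ x₀)
      have hb2 := abs_le.mp (hK₂ t₀ ht₀ x₀)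
      have hK₁K : K₁ ≤ K := le_trans (le_max_left _ _) (le_max_left _ _)
      have hK₂K : K₂ ≤ K := le_trans (le_max_right _ _) (le_max_left _ _)
      have hwu : w ≤ K := le_trans hw.2 (max_le (by linarith) (by linarith))
      have hwl : -K ≤ w := le_trans (le_min (by linarith) (by linarith)) hw.1
      exact abs_le.mpr ⟨by linarith, by linarith⟩
    have hmvt := aux_mvt_bound (g := fun w => S.Fbar t₀ x₀ w) (g' := fun w => S.FbarZ t₀ x₀ w)
      hCpos.le
      (fun w hw => hS.Fbar_dZ (t₀, x₀, w) (hDsub (hseg w hw)))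
      (fun w hw => hS.FbarZ_pos ε hεmem (t₀, x₀, w) (hseg w (Set.mem_Icc_of_Ioo hw)))
      (fun w hw => (hC (t₀, x₀, w) (Set.mem_inter (hseg w (Set.mem_Icc_of_Ioo hw))
        (habsw w (Set.mem_Icc_of_Ioo hw)))).1)
    have hE : (0:ℝ) < Real.exp (lam * (S.T - t₀)) := Real.exp_pos _
    have hmax2 : max (d2x u₁ t₀ x₀ - d2x u₂ t₀ x₀) 0 ≤
        2 * (η * Real.exp (lam * (S.T - t₀))) := by
      apply max_le (by nlinarith [hspace]) (by positivity)
    have hfinal : S.Fbar t₀ x₀ (d2x u₁ t₀ x₀) - S.Fbar t₀ x₀ (d2x u₂ t₀ x₀) ≤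
        C * (2 * (η * Real.exp (lam * (S.T - t₀)))) :=
      le_trans hmvt (mul_le_mul_of_nonneg_left hmax2 hCpos.le)
    rw [hlamdef] at htime
    nlinarith [htime, hfinal, mul_pos hη hE,
      mul_nonneg (mul_nonneg (mul_nonneg hη.le (by positivity : (0:ℝ) ≤ 2*C+1)) hE.le)
        (sq_nonneg x₀)]
  -- conclude
  intro t ht x
  refine le_of_forall_pos_le_add ?_
  intro δ hδ
  have hcpos : 0 < Real.exp (lam * (S.T - t)) * (1 + x^2) := by positivity
  have hkey := key (δ / (Real.exp (lam * (S.T - t)) * (1 + x^2))) (by positivity) t ht x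
  have : δ / (Real.exp (lam * (S.T - t)) * (1 + x^2)) *
      (Real.exp (lam * (S.T - t)) * (1 + x^2)) = δ := div_mul_cancel₀ _ hcpos.ne'
  nlinarith [hkey]


/-- **Comparison estimate for classical solutions** (used in the proof of Theorem 3.1).
Under the standing assumptions, if `u₁, u₂` are classical solutions with terminal
conditions `Φ₁, Φ₂` whose difference is bounded, then
`sup_{[0,T]×ℝ} |u₁ − u₂| ≤ sup_ℝ |Φ₁ − Φ₂|`. -/
theorem comparison_estimate_classical (S : Standing) (hS : S.Hyp)
    (Φ₁ Φ₂ : ℝ → ℝ) (hΦ₁ : Continuous Φ₁) (hΦ₂ : Continuous Φ₂)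
    (hdiff_bdd : ∃ B : ℝ, ∀ x : ℝ, |Φ₁ x - Φ₂ x| ≤ B)
    (u₁ u₂ : ℝ → ℝ → ℝ)
    (h₁ : Standing.ClassicalSol S Φ₁ u₁) (h₂ : Standing.ClassicalSol S Φ₂ u₂) :
    ∀ B : ℝ, (∀ x : ℝ, |Φ₁ x - Φ₂ x| ≤ B) →
      ∀ t ∈ Set.Icc (0 : ℝ) S.T, ∀ x : ℝ, |u₁ t x - u₂ t x| ≤ B := by
  intro B hB t ht x
  have h1 := one_sided_comparison S hS Φ₁ Φ₂ u₁ u₂ h₁ h₂ B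
    (fun x => (abs_le.mp (hB x)).2) t ht x
  have h2 := one_sided_comparison S hS Φ₂ Φ₁ u₂ u₁ h₂ h₁ B
    (fun x => by have := (abs_le.mp (hB x)).1; linarith) t ht x
  rw [abs_le]; constructor <;> linarith
end
end
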